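/- arXiv:2304.07497 — 6 statements merged into one kernel-verified Lean document; each statement's English description precedes it below -/
import Mathlib

section
/- Let $\vartheta_1 > 0$, $\vartheta_2 > 0$, $\vartheta_3 > 0$, $0 < m < 1$ and $\nu \in (0,1)$. Suppose $V : [0,\infty) \to [0,\infty)$ is differentiable and satisfies the differential inequality $\dot V(t) \le -\vartheta_1 V(t) - \vartheta_2 V(t)^m + \vartheta_3$ for all $t \ge 0$. Define the settling time bound $T_s^* := \max\{ \tfrac{1}{\nu\vartheta_1(1-m)} \ln\tfrac{\nu\vartheta_1 V(0)^{1-m} + \vartheta_2}{\vartheta_2},\ \tfrac{1}{\vartheta_1(1-m)} \ln\tfrac{\vartheta_1 V(0)^{1-m} + \nu\vartheta_2}{\nu\vartheta_2} \}$. Then for every $t \ge T_s^*$ one has $V(t) \le \min\{ \tfrac{\vartheta_3}{(1-\nu)\vartheta_1},\ (\tfrac{\vartheta_3}{(1-\nu)\vartheta_2})^{1/m} \}$ (practical fast finite-time stability). -/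
/-- No-escape / invariance: once `V` is below `B`, it stays below `B`
provided the derivative is negative whenever `V ≥ B`. -/
lemma pffts_no_escape (B : ℝ) (V : ℝ → ℝ) (t₀ : ℝ)
    (hdiff : ∀ t, t₀ ≤ t → DifferentiableAt ℝ V t)
    (hder : ∀ t, t₀ ≤ t → B ≤ V t → deriv V t < 0)
    (h0 : V t₀ ≤ B) : ∀ t, t₀ ≤ t → V t ≤ B := by
  intro t₁ ht₁
  by_contra hVt₁
  push_neg at hVt₁
  have ht₀t₁ : t₀ < t₁ := by
    rcases lt_or_eq_of_le ht₁ with h | h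
    · exact h
    · exfalso; rw [← h] at hVt₁; linarith
  set S : Set ℝ := {t | t ∈ Set.Icc t₀ t₁ ∧ V t ≤ B} with hSdef
  have hne : S.Nonempty := ⟨t₀, ⟨le_refl _, le_of_lt ht₀t₁⟩, h0⟩
  have hbdd : BddAbove S := ⟨t₁, fun x hx => hx.1.2⟩
  set s := sSup S with hsdef
  have hst₀ : t₀ ≤ s := le_csSup hbdd ⟨⟨le_refl _, le_of_lt ht₀t₁⟩, h0⟩
  have hst₁ : s ≤ t₁ := csSup_le hne fun x hx => hx.1.2
  have hVs : V s ≤ B := by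
    have hc : ContinuousAt V s := (hdiff s hst₀).continuousAt
    obtain ⟨u, hu_mem, hu_tendsto⟩ :=
      mem_closure_iff_seq_limit.1 (csSup_mem_closure hne hbdd)
    have htend := hc.tendsto.comp hu_tendsto
    exact le_of_tendsto htend (Filter.Eventually.of_forall fun n => (hu_mem n).2)
  have hslt : s < t₁ := by
    rcases lt_or_eq_of_le hst₁ with h | h
    · exact h
    · exfalso; rw [h] at hVs; linarith
  have hanti : StrictAntiOn V (Set.Icc s t₁) := by
    apply strictAntiOn_of_deriv_neg (convex_Icc s t₁)
    · exact fun x hx => (hdiff x (le_trans hst₀ hx.1)).continuousAt.continuousWithinAt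
    · intro x hx
      rw [interior_Icc] at hx
      have hx0 : t₀ ≤ x := le_trans hst₀ hx.1.le
      have hVx : B ≤ V x := by
        by_contra h
        push_neg at h
        have hxS : x ∈ S := ⟨⟨hx0, hx.2.le⟩, h.le⟩
        have := le_csSup hbdd hxS
        linarith [hx.1]
      exact hder x hx0 hVx
  have := hanti ⟨le_refl s, hslt.le⟩ ⟨hslt.le, le_refl t₁⟩ hslt
  linarith

/-- Settling: if `deriv V ≤ -a V - b V^m` whenever `V ≥ B`, then `V ≤ B` after
the explicit settling time. -/
lemma pffts_settle (a b m B : ℝ) (ha : 0 < a) (hb : 0 < b)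
    (hm : 0 < m) (hm1 : m < 1) (hB : 0 < B) (V : ℝ → ℝ)
    (hVnonneg : ∀ t, 0 ≤ t → 0 ≤ V t)
    (hdiff : ∀ t, 0 ≤ t → DifferentiableAt ℝ V t)
    (hder : ∀ t, 0 ≤ t → B ≤ V t → deriv V t ≤ -a * V t - b * (V t) ^ m) :
    ∀ t, (1 / (a * (1 - m))) * Real.log ((a * (V 0) ^ (1 - m) + b) / b) ≤ t →
      V t ≤ B := by
  have h1m : 0 < 1 - m := by linarith
  set W0 : ℝ := (V 0) ^ (1 - m) with hW0def
  have hW0 : 0 ≤ W0 := Real.rpow_nonneg (hVnonneg 0 le_rfl) _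
  set T : ℝ := (1 / (a * (1 - m))) * Real.log ((a * W0 + b) / b) with hTdef
  have hargpos : 0 < (a * W0 + b) / b := by positivity
  have harg1 : 1 ≤ (a * W0 + b) / b := by
    rw [le_div_iff₀ hb]; nlinarith
  have hT0 : 0 ≤ T := by
    apply mul_nonneg
    · positivity
    · exact Real.log_nonneg harg1
  -- strict negativity of the derivative above B
  have hderneg : ∀ t, 0 ≤ t → B ≤ V t → deriv V t < 0 := by
    intro t ht hBV
    have h := hder t ht hBV
    have hVm : 0 < (V t) ^ m := Real.rpow_pos_of_pos (lt_of_lt_of_le hB hBV) m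
    nlinarith
  -- Key step: there is a time in [0, T] where V ≤ B
  have hexists : ∃ t₀, t₀ ∈ Set.Icc (0 : ℝ) T ∧ V t₀ ≤ B := by
    by_contra hno
    push_neg at hno
    have hVgt : ∀ t ∈ Set.Icc (0 : ℝ) T, B < V t := fun t ht => hno t ht
    set α : ℝ := a * (1 - m) with hαdef
    have hα : 0 < α := by positivity
    set c : ℝ := b / a with hcdef
    have hac : a * c = b := by rw [hcdef]; field_simp
    have hαc : α * c = (1 - m) * b := by
      rw [hαdef]
      calc a * (1 - m) * c = (1 - m) * (a * c) := by ring
        _ = (1 - m) * b := by rw [hac]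
    set W : ℝ → ℝ := fun t => (V t) ^ (1 - m) with hWdef
    set g : ℝ → ℝ := fun t => Real.exp (α * t) * (W t + c) with hgdef
    -- derivative of g
    have hderivg : ∀ x ∈ Set.Ioo (0 : ℝ) T,
        HasDerivAt g (Real.exp (α * x) * α * (W x + c) +
          Real.exp (α * x) * (deriv V x * (1 - m) * (V x) ^ (1 - m - 1))) x := by
      intro x hx
      have hx0 : (0 : ℝ) ≤ x := hx.1.le
      have hVx : B < V x := hVgt x ⟨hx.1.le, hx.2.le⟩
      have hVxpos : 0 < V x := lt_trans hB hVx
      have hdV : HasDerivAt V (deriv V x) x := (hdiff x hx0).hasDerivAt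
      have hW' : HasDerivAt W (deriv V x * (1 - m) * (V x) ^ (1 - m - 1)) x :=
        hdV.rpow_const (Or.inl (ne_of_gt hVxpos))
      have hexp : HasDerivAt (fun t => Real.exp (α * t)) (Real.exp (α * x) * α) x := by
        have h := ((hasDerivAt_id x).const_mul α).exp
        simpa using h
      have := hexp.mul (hW'.add_const c)
      exact this
      try ring
    have hgc : ContinuousOn g (Set.Icc 0 T) := by
      intro x hx
      have hVc : ContinuousAt V x := (hdiff x hx.1).continuousAt
      have hWc : ContinuousAt W x := hVc.rpow_const (Or.inr h1m.le)
      exact ((Real.continuous_exp.comp (continuous_const.mul continuous_id)).continuousAt.mul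
        (hWc.add continuousAt_const)).continuousWithinAt
    have hanti : AntitoneOn g (Set.Icc 0 T) := by
      apply antitoneOn_of_deriv_nonpos (convex_Icc 0 T) hgc
      · intro x hx
        rw [interior_Icc] at hx
        exact ((hderivg x hx).differentiableAt).differentiableWithinAt
      · intro x hx
        rw [interior_Icc] at hx
        rw [(hderivg x hx).deriv]
        have hx0 : (0 : ℝ) ≤ x := hx.1.le
        have hVx : B < V x := hVgt x ⟨hx.1.le, hx.2.le⟩
        have hVxpos : 0 < V x := lt_trans hB hVx
        have hd := hder x hx0 hVx.le
        have hE : (0:ℝ) < (V x) ^ (1 - m - 1) := Real.rpow_pos_of_pos hVxpos _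
        have hEp : (V x) ^ (1 - m - 1) * (V x) ^ (1:ℝ) = (V x) ^ (1 - m) := by
          have he : (1 - m - 1 + 1 : ℝ) = 1 - m := by ring
          rw [← Real.rpow_add hVxpos, he]
        rw [Real.rpow_one] at hEp
        have hEpm : (V x) ^ (1 - m - 1) * (V x) ^ m = 1 := by
          have he : (1 - m - 1 + m : ℝ) = 0 := by ring
          rw [← Real.rpow_add hVxpos, he, Real.rpow_zero]
        have hexppos : 0 < Real.exp (α * x) := Real.exp_pos _
        have key : Real.exp (α * x) * (deriv V x * (1 - m) * (V x) ^ (1 - m - 1)) ≤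
            Real.exp (α * x) * ((-a * V x - b * (V x) ^ m) * (1 - m) * (V x) ^ (1 - m - 1)) := by
          apply mul_le_mul_of_nonneg_left _ hexppos.le
          apply mul_le_mul_of_nonneg_right (mul_le_mul_of_nonneg_right hd h1m.le) hE.le
        have expand : (-a * V x - b * (V x) ^ m) * (1 - m) * (V x) ^ (1 - m - 1)
            = -(α * W x) - (1 - m) * b := by
          have hWx : W x = (V x) ^ (1 - m) := rfl
          calc (-a * V x - b * (V x) ^ m) * (1 - m) * (V x) ^ (1 - m - 1)
              = -(a * (1 - m)) * ((V x) ^ (1 - m - 1) * V x)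
                - (1 - m) * b * ((V x) ^ (1 - m - 1) * (V x) ^ m) := by ring
            _ = -(α * W x) - (1 - m) * b := by
                rw [hEp, hEpm, hWx, hαdef]; ring
        rw [expand] at key
        have hz : Real.exp (α * x) * α * (W x + c) +
            Real.exp (α * x) * (-(α * W x) - (1 - m) * b) = 0 := by
          linear_combination Real.exp (α * x) * hαc
        linarith
    have h0mem : (0 : ℝ) ∈ Set.Icc (0 : ℝ) T := ⟨le_rfl, hT0⟩
    have hTmem : T ∈ Set.Icc (0 : ℝ) T := ⟨hT0, le_rfl⟩
    have hgT : g T ≤ g 0 := hanti h0mem hTmem hT0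
    have hgT' : Real.exp (α * T) * (W T + c) ≤ Real.exp (α * 0) * (W 0 + c) := hgT
    rw [mul_zero, Real.exp_zero, one_mul] at hgT'
    have hexpT : Real.exp (α * T) = (a * W0 + b) / b := by
      have hαT : α * T = Real.log ((a * W0 + b) / b) := by
        rw [hTdef, ← mul_assoc, mul_one_div, div_self hα.ne', one_mul]
      rw [hαT, Real.exp_log hargpos]
    rw [hexpT] at hgT'
    have hWT : 0 < W T := Real.rpow_pos_of_pos (lt_trans hB (hVgt T hTmem)) _
    have hW00 : W 0 = W0 := rfl
    rw [hW00] at hgT'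
    -- ((a*W0+b)/b) * (W T + c) ≤ W0 + c  with W T > 0 : contradiction
    have hkey : (a * W0 + b) * (W T + c) ≤ (W0 + c) * b := by
      have h := mul_le_mul_of_nonneg_right hgT' hb.le
      calc (a * W0 + b) * (W T + c) = (a * W0 + b) / b * (W T + c) * b := by
            field_simp
        _ ≤ (W0 + c) * b := h
    have hW0c : (W0 + c) * b = (a * W0 + b) * c := by
      linear_combination (-W0) * hac
    nlinarith [mul_pos (show (0:ℝ) < a * W0 + b by positivity) hWT]
  obtain ⟨t₀, ht₀mem, ht₀V⟩ := hexists
  have hstay := pffts_no_escape B V t₀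
    (fun t ht => hdiff t (le_trans ht₀mem.1 ht))
    (fun t ht hBV => hderneg t (le_trans ht₀mem.1 ht) hBV) ht₀V
  intro t ht
  exact hstay t (le_trans ht₀mem.2 ht)

/-- Lemma 1 (practical fast finite-time stability, scalar differential-inequality
form): if a nonnegative differentiable function `V` satisfies
`V' ≤ -ϑ₁ V - ϑ₂ V^m + ϑ₃` on `[0,∞)`, then after the settling time `Tₛ*`
the value of `V` stays in the explicit residual set. -/
theorem practical_fast_finite_time_stability
    (ϑ₁ ϑ₂ ϑ₃ m ν : ℝ)
    (hϑ₁ : 0 < ϑ₁) (hϑ₂ : 0 < ϑ₂) (hϑ₃ : 0 < ϑ₃)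
    (hm : 0 < m) (hm1 : m < 1) (hν : ν ∈ Set.Ioo (0 : ℝ) 1)
    (V : ℝ → ℝ)
    (hVnonneg : ∀ t, 0 ≤ t → 0 ≤ V t)
    (hVdiff : ∀ t, 0 ≤ t → DifferentiableAt ℝ V t)
    (hVineq : ∀ t, 0 ≤ t →
      deriv V t ≤ -ϑ₁ * V t - ϑ₂ * (V t) ^ m + ϑ₃) :
    ∀ t ≥ max ((1 / (ν * ϑ₁ * (1 - m))) *
          Real.log ((ν * ϑ₁ * (V 0) ^ (1 - m) + ϑ₂) / ϑ₂))
        ((1 / (ϑ₁ * (1 - m))) *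
          Real.log ((ϑ₁ * (V 0) ^ (1 - m) + ν * ϑ₂) / (ν * ϑ₂))),
      V t ≤ min (ϑ₃ / ((1 - ν) * ϑ₁)) ((ϑ₃ / ((1 - ν) * ϑ₂)) ^ (1 / m)) := by
  obtain ⟨hν0, hν1⟩ := hν
  have h1ν : 0 < 1 - ν := by linarith
  set B₁ : ℝ := ϑ₃ / ((1 - ν) * ϑ₁) with hB₁def
  set B₂ : ℝ := (ϑ₃ / ((1 - ν) * ϑ₂)) ^ (1 / m) with hB₂def
  have hB₁pos : 0 < B₁ := by positivity
  have hbase : 0 < ϑ₃ / ((1 - ν) * ϑ₂) := by positivity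
  have hB₂pos : 0 < B₂ := Real.rpow_pos_of_pos hbase _
  -- first bound
  have h1 : ∀ t, (1 / (ν * ϑ₁ * (1 - m))) *
      Real.log ((ν * ϑ₁ * (V 0) ^ (1 - m) + ϑ₂) / ϑ₂) ≤ t → V t ≤ B₁ := by
    apply pffts_settle (ν * ϑ₁) ϑ₂ m B₁ (by positivity) hϑ₂ hm hm1 hB₁pos V hVnonneg hVdiff
    intro t ht hBV
    have hineq := hVineq t ht
    have hϑ₃le : ϑ₃ ≤ (1 - ν) * ϑ₁ * V t := by
      have hB₁eq : (1 - ν) * ϑ₁ * B₁ = ϑ₃ := by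
        rw [hB₁def]; field_simp
      nlinarith
    linarith
  -- second bound
  have h2 : ∀ t, (1 / (ϑ₁ * (1 - m))) *
      Real.log ((ϑ₁ * (V 0) ^ (1 - m) + ν * ϑ₂) / (ν * ϑ₂)) ≤ t → V t ≤ B₂ := by
    apply pffts_settle ϑ₁ (ν * ϑ₂) m B₂ hϑ₁ (by positivity) hm hm1 hB₂pos V hVnonneg hVdiff
    intro t ht hBV
    have hineq := hVineq t ht
    have hBm : B₂ ^ m = ϑ₃ / ((1 - ν) * ϑ₂) := by
      rw [hB₂def, ← Real.rpow_mul hbase.le, one_div_mul_cancel hm.ne', Real.rpow_one]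
    have hmono : B₂ ^ m ≤ (V t) ^ m := Real.rpow_le_rpow hB₂pos.le hBV hm.le
    have hϑ₃le : ϑ₃ ≤ (1 - ν) * ϑ₂ * (V t) ^ m := by
      rw [hBm] at hmono
      rw [div_le_iff₀ (by positivity)] at hmono
      linarith [hmono]
    linarith
  intro t ht
  exact le_min (h1 t (le_trans (le_max_left _ _) ht))
    (h2 t (le_trans (le_max_right _ _) ht))
end

section
/- For every real number $\sigma$ and every constant $\kappa > 0$ one has $0 \le |\sigma| - \sigma \tanh(\sigma/\kappa) \le 0.2785\,\kappa$. -/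
open Real Nat

lemma exp_taylor_lb : (3.5906644 : ℝ) ≤ Real.exp 1.2785 := by
  have h1 : (2.7182818283 : ℝ) < Real.exp 1 := Real.exp_one_gt_d9
  have h2 : ∑ i ∈ Finset.range 5, (0.2785:ℝ) ^ i / i ! ≤ Real.exp 0.2785 :=
    Real.sum_le_exp_of_nonneg (by norm_num) 5
  have hs : ∑ i ∈ Finset.range 5, (0.2785:ℝ) ^ i / i ! = 1 + 0.2785 + 0.2785^2/2 + 0.2785^3/6 + 0.2785^4/24 := by
    simp [Finset.sum_range_succ, Nat.factorial]
  have h3 : Real.exp 1.2785 = Real.exp 1 * Real.exp 0.2785 := by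
    rw [← Real.exp_add]; norm_num
  rw [h3]
  rw [hs] at h2
  nlinarith [Real.exp_pos (0.2785:ℝ), Real.exp_pos (1:ℝ)]

lemma key (t : ℝ) : t ≤ 0.2785 * (Real.exp t + 1) := by
  have hE := exp_taylor_lb
  have h1 : t - 0.2785 ≤ Real.exp (t - 1.2785) := by
    have := Real.add_one_le_exp (t - 1.2785); linarith
  have h2 : Real.exp t = Real.exp (t - 1.2785) * Real.exp 1.2785 := by
    rw [← Real.exp_add]; ring_nf
  have h3 := Real.exp_pos (t - 1.2785)
  nlinarith [mul_le_mul_of_nonneg_left hE (le_of_lt h3)]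

/-- Lemma 2, first inequality: `0 ≤ |σ| - σ tanh(σ/κ) ≤ 0.2785 κ` for all `σ` and `κ > 0`. -/
theorem abs_sub_mul_tanh_bound (σ κ : ℝ) (hκ : 0 < κ) :
    0 ≤ |σ| - σ * Real.tanh (σ / κ) ∧
    |σ| - σ * Real.tanh (σ / κ) ≤ 0.2785 * κ := by
  have hodd : σ * Real.tanh (σ / κ) = |σ| * Real.tanh (|σ| / κ) := by
    rcases abs_cases σ with ⟨h, _⟩ | ⟨h, _⟩
    · rw [h]
    · rw [h, neg_div, Real.tanh_neg]; ring
  rw [hodd]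
  set y := |σ| with hy
  have hy0 : 0 ≤ y := abs_nonneg σ
  set x := y / κ with hx
  have hx0 : 0 ≤ x := div_nonneg hy0 hκ.le
  have hyx : y = x * κ := by rw [hx, div_mul_cancel₀ y hκ.ne']
  have hc : 0 < Real.cosh x := Real.cosh_pos x
  have htanh : Real.tanh x = Real.sinh x / Real.cosh x := Real.tanh_eq_sinh_div_cosh x
  have hsinh : Real.sinh x = (Real.exp x - Real.exp (-x)) / 2 := Real.sinh_eq x
  have hcosh : Real.cosh x = (Real.exp x + Real.exp (-x)) / 2 := Real.cosh_eq x
  have hexp : Real.exp (-x) * Real.exp x = 1 := by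
    rw [← Real.exp_add]; simp
  have hkey := key (2 * x)
  have h2x : Real.exp (2 * x) = Real.exp x * Real.exp x := by
    rw [← Real.exp_add]; ring_nf
  rw [h2x] at hkey
  have hep : 0 < Real.exp x := Real.exp_pos x
  have hen : 0 < Real.exp (-x) := Real.exp_pos (-x)
  have h1 : Real.tanh x ≤ 1 := by
    rw [htanh, div_le_one hc]
    nlinarith
  constructor
  · nlinarith
  · rw [htanh, hsinh, hcosh]
    have h : y - y * ((Real.exp x - Real.exp (-x)) / 2 / ((Real.exp x + Real.exp (-x)) / 2)) =
        y * (2 * Real.exp (-x)) / (Real.exp x + Real.exp (-x)) := by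
      field_simp
      ring
    rw [h, div_le_iff₀ (by positivity)]
    have hmul := mul_le_mul_of_nonneg_right hkey (mul_nonneg hκ.le hen.le)
    nlinarith [hmul, hexp, mul_pos hκ hen]
end

section
/- For every real number $\sigma$ and all constants $\tau_\sigma > 0$, $\varepsilon_\sigma > 0$ one has $0 \le |\sigma| - \sigma^2 \sqrt{\dfrac{\sigma^2 + \tau_\sigma^2 + \varepsilon_\sigma^2}{(\sigma^2 + \tau_\sigma^2)(\sigma^2 + \varepsilon_\sigma^2)}} < \dfrac{\tau_\sigma \varepsilon_\sigma}{\sqrt{\tau_\sigma^2 + \varepsilon_\sigma^2}}$. -/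
/-- Lemma 2, second inequality: the smooth signum-type approximation satisfies
`0 ≤ |σ| - σ² √((σ² + τ² + ε²)/((σ² + τ²)(σ² + ε²))) < τ ε / √(τ² + ε²)`. -/
theorem abs_sub_smooth_sign_approx (σ τ ε : ℝ) (hτ : 0 < τ) (hε : 0 < ε) :
    0 ≤ |σ| - σ ^ 2 * Real.sqrt ((σ ^ 2 + τ ^ 2 + ε ^ 2) /
        ((σ ^ 2 + τ ^ 2) * (σ ^ 2 + ε ^ 2))) ∧
    |σ| - σ ^ 2 * Real.sqrt ((σ ^ 2 + τ ^ 2 + ε ^ 2) /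
        ((σ ^ 2 + τ ^ 2) * (σ ^ 2 + ε ^ 2))) <
      τ * ε / Real.sqrt (τ ^ 2 + ε ^ 2) := by
  have hs0 : (0:ℝ) ≤ σ ^ 2 := sq_nonneg σ
  have hAB : (0:ℝ) < (σ ^ 2 + τ ^ 2) * (σ ^ 2 + ε ^ 2) := by positivity
  set r : ℝ := (σ ^ 2 + τ ^ 2 + ε ^ 2) / ((σ ^ 2 + τ ^ 2) * (σ ^ 2 + ε ^ 2)) with hrdef
  have hr0 : 0 ≤ r := by positivity
  have habs : |σ| = Real.sqrt (σ ^ 2) := (Real.sqrt_sq_eq_abs σ).symm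
  have hf : σ ^ 2 * Real.sqrt r = Real.sqrt ((σ ^ 2) ^ 2 * r) := by
    rw [Real.sqrt_mul (sq_nonneg _), Real.sqrt_sq hs0]
  have hsr : (σ ^ 2) ^ 2 * r = σ ^ 2 * (σ ^ 2 + τ ^ 2 + ε ^ 2) * σ ^ 2
      / ((σ ^ 2 + τ ^ 2) * (σ ^ 2 + ε ^ 2)) := by
    rw [hrdef]; field_simp
  have key : (σ ^ 2) ^ 2 * r ≤ σ ^ 2 := by
    rw [hsr, div_le_iff₀ hAB]
    nlinarith [sq_nonneg (σ * τ * ε), sq_nonneg σ]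
  have hle : Real.sqrt ((σ ^ 2) ^ 2 * r) ≤ Real.sqrt (σ ^ 2) := Real.sqrt_le_sqrt key
  have hg0 : 0 ≤ |σ| - σ ^ 2 * Real.sqrt r := by
    rw [habs, hf]; linarith
  refine ⟨hg0, ?_⟩
  set g : ℝ := |σ| - σ ^ 2 * Real.sqrt r with hgdef
  have hsq1 : Real.sqrt (σ ^ 2) ^ 2 = σ ^ 2 := Real.sq_sqrt hs0
  have hsq2 : Real.sqrt ((σ ^ 2) ^ 2 * r) ^ 2 = (σ ^ 2) ^ 2 * r :=
    Real.sq_sqrt (by positivity)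
  have hprod : g * (Real.sqrt (σ ^ 2) + Real.sqrt ((σ ^ 2) ^ 2 * r))
      = σ ^ 2 - (σ ^ 2) ^ 2 * r := by
    rw [hgdef, habs, hf]; nlinarith [hsq1, hsq2]
  have hg2 : g ^ 2 ≤ σ ^ 2 - (σ ^ 2) ^ 2 * r := by
    rw [← hprod]
    have hf0 : 0 ≤ Real.sqrt ((σ ^ 2) ^ 2 * r) := Real.sqrt_nonneg _
    have : g ≤ Real.sqrt (σ ^ 2) + Real.sqrt ((σ ^ 2) ^ 2 * r) := by
      rw [hgdef, habs, hf]; linarith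
    nlinarith [hg0]
  have hdiff : σ ^ 2 - (σ ^ 2) ^ 2 * r
      = σ ^ 2 * τ ^ 2 * ε ^ 2 / ((σ ^ 2 + τ ^ 2) * (σ ^ 2 + ε ^ 2)) := by
    rw [hrdef]; field_simp; ring
  have hlt : σ ^ 2 - (σ ^ 2) ^ 2 * r < τ ^ 2 * ε ^ 2 / (τ ^ 2 + ε ^ 2) := by
    rw [hdiff, div_lt_div_iff₀ hAB (by positivity)]
    have h1 : 0 < τ ^ 2 * ε ^ 2 := by positivity
    nlinarith [sq_nonneg (σ ^ 2 * τ * ε), h1, mul_pos h1 h1]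
  set R : ℝ := τ * ε / Real.sqrt (τ ^ 2 + ε ^ 2) with hRdef
  have hR0 : 0 < R := by
    have : 0 < Real.sqrt (τ ^ 2 + ε ^ 2) := Real.sqrt_pos.mpr (by positivity)
    positivity
  have hR2 : R ^ 2 = τ ^ 2 * ε ^ 2 / (τ ^ 2 + ε ^ 2) := by
    rw [hRdef, div_pow, Real.sq_sqrt (by positivity)]; ring_nf
  have hfin : g ^ 2 < R ^ 2 := by rw [hR2]; exact lt_of_le_of_lt hg2 hlt
  exact lt_of_pow_lt_pow_left₀ 2 (le_of_lt hR0) hfin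
end

section
/- Let $m_c = m_{c2}/m_{c1}$ where $m_{c2}, m_{c1}$ are positive odd integers with $m_c < 1$, and set $\beta_1 = \frac{1}{1+m_c}\big[ 2^{m_c - 1} - 2^{(m_c-1)(m_c+1)} \big]$ and $\beta_2 = \frac{1}{1+m_c}\big[ \frac{2 m_c + 1}{m_c + 1} + \frac{2^{-(m_c-1)^2 (m_c+1)}}{m_c+1} - 2^{m_c - 1} \big]$. Then for all real numbers $\tilde\chi, \chi$ one has $\tilde\chi\, (\chi - \tilde\chi)^{m_c} \le -\beta_1\, \tilde\chi^{\,1+m_c} + \beta_2\, \chi^{\,1+m_c}$. -/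
/-- Signed real power: for an exponent `p` that is a ratio of odd positive
integers, `x^p := sign(x) |x|^p`. -/
noncomputable def signedRpow (x p : ℝ) : ℝ := Real.sign x * |x| ^ p

open Real in
noncomputable def thf (p : ℝ) : ℝ := (2:ℝ) ^ (2*p - 1) * Real.log 2 * (p * (1 - p)) / (1 + p)

noncomputable def Kf (p : ℝ) : ℝ := (p / ((1 + p) * (1 - thf p))) ^ p / (1 + p)

noncomputable def B2e (p : ℝ) : ℝ :=
  (1/(1+p)) * ((2*p+1)/(p+1) + (2:ℝ)^(-(p-1)^2*(p+1))/(p+1) - (2:ℝ)^(p-1))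

open Real

lemma lem_rpow_le {x y : ℝ} (n d : ℕ) (hd : 0 < d) (hx : 0 ≤ x) (hy : 0 ≤ y)
    (h : x ^ n ≤ y ^ d) : x ^ ((n:ℝ)/(d:ℝ)) ≤ y := by
  have hd' : (0:ℝ) < d := by exact_mod_cast hd
  have e1 : x ^ ((n:ℝ)/(d:ℝ)) = (x ^ n) ^ ((d:ℝ)⁻¹) := by
    rw [← Real.rpow_natCast x n, ← Real.rpow_mul hx]
    ring_nf
  have e2 : (y ^ d) ^ ((d:ℝ)⁻¹) = y := by
    rw [← Real.rpow_natCast y d, ← Real.rpow_mul hy, mul_inv_cancel₀ hd'.ne', Real.rpow_one]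
  calc x ^ ((n:ℝ)/(d:ℝ)) = (x ^ n) ^ ((d:ℝ)⁻¹) := e1
    _ ≤ (y ^ d) ^ ((d:ℝ)⁻¹) := Real.rpow_le_rpow (by positivity) h (by positivity)
    _ = y := e2

lemma lem_le_rpow {x y : ℝ} (n d : ℕ) (hd : 0 < d) (hx : 0 ≤ x) (hy : 0 ≤ y)
    (h : y ^ d ≤ x ^ n) : y ≤ x ^ ((n:ℝ)/(d:ℝ)) := by
  have hd' : (0:ℝ) < d := by exact_mod_cast hd
  have e1 : x ^ ((n:ℝ)/(d:ℝ)) = (x ^ n) ^ ((d:ℝ)⁻¹) := by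
    rw [← Real.rpow_natCast x n, ← Real.rpow_mul hx]; ring_nf
  have e2 : (y ^ d) ^ ((d:ℝ)⁻¹) = y := by
    rw [← Real.rpow_natCast y d, ← Real.rpow_mul hy, mul_inv_cancel₀ hd'.ne', Real.rpow_one]
  calc y = (y ^ d) ^ ((d:ℝ)⁻¹) := e2.symm
    _ ≤ (x ^ n) ^ ((d:ℝ)⁻¹) := Real.rpow_le_rpow (by positivity) h (by positivity)
    _ = x ^ ((n:ℝ)/(d:ℝ)) := e1.symm

lemma lem_rpow_neg_le {q : ℝ} (n d : ℕ) (hd : 0 < d) (hq : 0 < q)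
    (h : 1 ≤ q ^ d * 2 ^ n) : (2:ℝ) ^ (-((n:ℝ)/(d:ℝ))) ≤ q := by
  have h2 : (1/q : ℝ) ≤ (2:ℝ) ^ ((n:ℝ)/(d:ℝ)) := by
    apply lem_le_rpow n d hd (by norm_num) (by positivity)
    rw [div_pow, one_pow, div_le_iff₀ (by positivity)]
    linarith [h]
  have hpos : (0:ℝ) < (2:ℝ) ^ ((n:ℝ)/(d:ℝ)) := by positivity
  rw [Real.rpow_neg (by norm_num)]
  rw [inv_le_comm₀ hpos hq] at *
  calc q⁻¹ = 1/q := (one_div q).symm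
    _ ≤ (2:ℝ) ^ ((n:ℝ)/(d:ℝ)) := h2

lemma lem_le_rpow_neg {q : ℝ} (n d : ℕ) (hd : 0 < d) (hq : 0 < q)
    (h : q ^ d * 2 ^ n ≤ 1) : q ≤ (2:ℝ) ^ (-((n:ℝ)/(d:ℝ))) := by
  have h2 : (2:ℝ) ^ ((n:ℝ)/(d:ℝ)) ≤ 1/q := by
    apply lem_rpow_le n d hd (by norm_num) (by positivity)
    rw [div_pow, one_pow, le_div_iff₀ (by positivity)]
    calc (2:ℝ)^n * q^d = q^d * 2^n := by ring
      _ ≤ 1 := h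
  have hpos : (0:ℝ) < (2:ℝ) ^ ((n:ℝ)/(d:ℝ)) := by positivity
  rw [Real.rpow_neg (by norm_num), le_inv_comm₀ hq hpos]
  calc (2:ℝ) ^ ((n:ℝ)/(d:ℝ)) ≤ 1/q := h2
    _ = q⁻¹ := one_div q

lemma thf_nonneg {p : ℝ} (hp0 : 0 < p) (hp1 : p < 1) : 0 ≤ thf p := by
  unfold thf
  have h2 : (0:ℝ) < (2:ℝ) ^ (2*p - 1) := by positivity
  have hl : (0:ℝ) < Real.log 2 := Real.log_pos (by norm_num)
  have : 0 ≤ p * (1 - p) := by nlinarith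
  positivity

lemma two_rpow_le_two {p : ℝ} (hp1 : p ≤ 1) : (2:ℝ) ^ (2*p - 1) ≤ 2 := by
  calc (2:ℝ) ^ (2*p - 1) ≤ (2:ℝ) ^ (1:ℝ) :=
        Real.rpow_le_rpow_of_exponent_le (by norm_num) (by linarith)
    _ = 2 := Real.rpow_one 2

lemma thf_le {p : ℝ} (hp0 : 0 < p) (hp1 : p < 1) : thf p ≤ 0.35 := by
  unfold thf
  have h2 : (2:ℝ) ^ (2*p - 1) ≤ 2 := two_rpow_le_two hp1.le
  have h2' : (0:ℝ) < (2:ℝ) ^ (2*p - 1) := by positivity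
  have hl : (0:ℝ) < Real.log 2 := Real.log_pos (by norm_num)
  have hl2 : Real.log 2 ≤ 0.6932 := by linarith [Real.log_two_lt_d9]
  have hq : p * (1 - p) ≤ 1/4 := by nlinarith [sq_nonneg (p - 1/2)]
  have hq0 : 0 ≤ p * (1 - p) := by nlinarith
  have h1p : (1:ℝ) ≤ 1 + p := by linarith
  have hnum : (2:ℝ) ^ (2*p - 1) * Real.log 2 * (p * (1 - p)) ≤ 2 * 0.6932 * (1/4) := by
    apply mul_le_mul (mul_le_mul h2 hl2 hl.le (by norm_num)) hq hq0 (by norm_num)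
  calc (2:ℝ) ^ (2*p - 1) * Real.log 2 * (p * (1 - p)) / (1 + p)
      ≤ (2:ℝ) ^ (2*p - 1) * Real.log 2 * (p * (1 - p)) / 1 := by
        apply div_le_div_of_nonneg_left _ (by norm_num) h1p
        · positivity
    _ = (2:ℝ) ^ (2*p - 1) * Real.log 2 * (p * (1 - p)) := by ring
    _ ≤ 2 * 0.6932 * (1/4) := hnum
    _ ≤ 0.35 := by norm_num

-- Young's inequality with parameter
lemma young {p x y γ : ℝ} (hp0 : 0 < p) (hx : 0 ≤ x) (hy : 0 ≤ y) (hγ : 0 < γ) :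
    x * y ^ p ≤ γ ^ p * x ^ (1+p) / (1+p) + (p/((1+p)*γ)) * y ^ (1+p) := by
  have h1p : (0:ℝ) < 1 + p := by linarith
  have key := Real.geom_mean_le_arith_mean2_weighted
    (w₁ := 1/(1+p)) (w₂ := p/(1+p)) (p₁ := (γ*x)^(1+p)) (p₂ := y^(1+p))
    (by positivity) (by positivity) (by positivity) (by positivity) (by field_simp)
  have e1 : ((γ*x)^(1+p))^((1:ℝ)/(1+p)) = γ*x := by
    rw [← Real.rpow_mul (by positivity), mul_one_div, div_self h1p.ne', Real.rpow_one]
  have e2 : (y^(1+p))^(p/(1+p)) = y^p := by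
    rw [← Real.rpow_mul hy]
    congr 1
    field_simp
  rw [e1, e2] at key
  have e3 : (γ*x)^(1+p) = γ^(1+p) * x^(1+p) := Real.mul_rpow hγ.le hx
  have e4 : γ^(1+p) = γ * γ^p := by
    rw [Real.rpow_add hγ, Real.rpow_one]
  rw [← mul_le_mul_iff_right₀ hγ]
  calc γ * (x * y^p) = (γ*x) * y^p := by ring
    _ ≤ 1/(1+p) * ((γ*x)^(1+p)) + p/(1+p) * y^(1+p) := key
    _ = γ * (γ ^ p * x ^ (1+p) / (1+p) + (p/((1+p)*γ)) * y ^ (1+p)) := by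
        rw [e3, e4]; field_simp

-- power mean: (a+b)^(1+p) ≤ 2^p (a^(1+p)+b^(1+p))
lemma powmean {a b p : ℝ} (ha : 0 ≤ a) (hb : 0 ≤ b) (hp : 0 ≤ p) :
    (a+b)^(1+p) ≤ (2:ℝ)^p * (a^(1+p) + b^(1+p)) := by
  have h := NNReal.rpow_add_le_mul_rpow_add_rpow a.toNNReal b.toNNReal (p := 1+p) (by linarith : (1:ℝ) ≤ 1+p)
  have h2 := (NNReal.coe_le_coe).2 h
  push_cast [NNReal.coe_rpow, Real.coe_toNNReal _ ha, Real.coe_toNNReal _ hb] at h2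
  convert h2 using 2
  norm_num

lemma pointwise {p : ℝ} (hp0 : 0 < p) (hp1 : p < 1) (χt χ : ℝ) :
    χt * signedRpow (χ - χt) p ≤
      -(thf p * (2:ℝ)^(-p)) * |χt|^(1+p) + (Kf p + thf p) * |χ|^(1+p) := by
  set θ := thf p with hθdef
  have hθ0 : 0 ≤ θ := thf_nonneg hp0 hp1
  have hθ1 : θ < 1 := lt_of_le_of_lt (thf_le hp0 hp1) (by norm_num)
  have h1p : (0:ℝ) < 1 + p := by linarith
  set u := χ - χt with hu
  have hχt : χt = χ - u := by rw [hu]; ring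
  -- step A : identity
  have hsu : u * Real.sign u = |u| := by
    rcases lt_trichotomy u 0 with h | h | h
    · rw [Real.sign_of_neg h, abs_of_neg h]; ring
    · rw [h]; simp
    · rw [Real.sign_of_pos h, abs_of_pos h]; ring
  have habs : |u| * |u|^p = |u|^(1+p) := by
    rcases eq_or_ne u 0 with h | h
    · rw [h]; simp [Real.zero_rpow (by linarith : (1:ℝ)+p ≠ 0),
        Real.zero_rpow (by linarith : p ≠ 0)]
    · rw [Real.rpow_add (abs_pos.2 h), Real.rpow_one]
  have hidA : χt * signedRpow u p = χ * (Real.sign u * |u|^p) - |u|^(1+p) := by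
    rw [signedRpow, hχt, ← habs]
    have : (χ - u) * (Real.sign u * |u| ^ p)
        = χ * (Real.sign u * |u| ^ p) - (u * Real.sign u) * |u| ^ p := by ring
    rw [this, hsu]
  -- step B
  have hB : χ * (Real.sign u * |u|^p) ≤ |χ| * |u|^p := by
    have h1 : χ * Real.sign u ≤ |χ| := by
      rcases lt_trichotomy u 0 with h | h | h
      · rw [Real.sign_of_neg h]; linarith [neg_abs_le χ]
      · rw [h]; simp [abs_nonneg]
      · rw [Real.sign_of_pos h]; simpa using le_abs_self χ
    calc χ * (Real.sign u * |u|^p) = (χ * Real.sign u) * |u|^p := by ring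
      _ ≤ |χ| * |u|^p := by
          apply mul_le_mul_of_nonneg_right h1 (by positivity)
  -- step C : Young
  set γ : ℝ := p / ((1 + p) * (1 - θ)) with hγdef
  have hγ : 0 < γ := by
    apply div_pos hp0
    apply mul_pos h1p
    linarith
  have hγeq : p / ((1+p) * γ) = 1 - θ := by
    rw [hγdef]
    field_simp
  have hC : |χ| * |u|^p ≤ Kf p * |χ|^(1+p) + (1-θ) * |u|^(1+p) := by
    have h := young hp0 (abs_nonneg χ) (abs_nonneg u) hγ
    rw [hγeq] at h
    calc |χ| * |u|^p ≤ γ ^ p * |χ| ^ (1+p) / (1+p) + (1-θ) * |u| ^ (1+p) := h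
      _ = Kf p * |χ|^(1+p) + (1-θ) * |u|^(1+p) := by
          rw [Kf, ← hγdef]; ring
  -- step D
  have hD : θ * ((2:ℝ)^(-p) * |χt|^(1+p)) ≤ θ * (|u|^(1+p) + |χ|^(1+p)) := by
    apply mul_le_mul_of_nonneg_left _ hθ0
    have h2p : (0:ℝ) < (2:ℝ)^p := by positivity
    have habs2 : |χt| ≤ |u| + |χ| := by
      rw [hχt]
      calc |χ - u| ≤ |χ| + |u| := abs_sub _ _
        _ = |u| + |χ| := by ring
    have h3 : |χt|^(1+p) ≤ (|u| + |χ|)^(1+p) :=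
      Real.rpow_le_rpow (abs_nonneg _) habs2 (by linarith)
    have h4 := powmean (abs_nonneg u) (abs_nonneg χ) hp0.le
    rw [Real.rpow_neg (by norm_num : (0:ℝ) ≤ 2)]
    rw [inv_mul_le_iff₀ h2p]
    calc |χt|^(1+p) ≤ (|u| + |χ|)^(1+p) := h3
      _ ≤ (2:ℝ)^p * (|u|^(1+p) + |χ|^(1+p)) := h4
  -- assemble
  rw [hidA]
  nlinarith [hB, hC, hD]

lemma B1_le {p : ℝ} (hp0 : 0 < p) (hp1 : p < 1) :
    (1/(1+p)) * ((2:ℝ)^(p-1) - (2:ℝ)^((p-1)*(p+1))) ≤ thf p * (2:ℝ)^(-p) := by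
  have h1p : (0:ℝ) < 1 + p := by linarith
  have e1 : (2:ℝ)^((p-1)*(p+1)) = (2:ℝ)^(p-1) * (2:ℝ)^(p^2-p) := by
    rw [← Real.rpow_add (by norm_num)]
    congr 1
    ring
  have e2 : 1 + (p^2-p)*Real.log 2 ≤ (2:ℝ)^(p^2-p) := by
    rw [Real.rpow_def_of_pos (by norm_num)]
    calc 1 + (p^2-p)*Real.log 2 = (Real.log 2 * (p^2-p)) + 1 := by ring
      _ ≤ Real.exp (Real.log 2 * (p^2-p)) := by linarith [Real.add_one_le_exp (Real.log 2 * (p^2-p))]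
  have e3 : (2:ℝ)^(2*p-1) * (2:ℝ)^(-p) = (2:ℝ)^(p-1) := by
    rw [← Real.rpow_add (by norm_num)]
    congr 1
    ring
  calc (1/(1+p)) * ((2:ℝ)^(p-1) - (2:ℝ)^((p-1)*(p+1)))
      = (1/(1+p)) * ((2:ℝ)^(p-1) * (1 - (2:ℝ)^(p^2-p))) := by rw [e1]; ring
    _ ≤ (1/(1+p)) * ((2:ℝ)^(p-1) * ((p - p^2) * Real.log 2)) := by
        apply mul_le_mul_of_nonneg_left _ (by positivity)
        apply mul_le_mul_of_nonneg_left _ (by positivity)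
        nlinarith [e2]
    _ = thf p * (2:ℝ)^(-p) := by
        rw [thf, ← e3]
        field_simp

lemma th_le_int {p a b q1 M : ℝ} (hp0 : 0 < p) (hp1 : p ≤ 1) (hap : a ≤ p) (hpb : p ≤ b)
    (ha0 : 0 ≤ a) (hq1 : (2:ℝ)^(2*b-1) ≤ q1) (hM : p*(1-p) ≤ M) (hM0 : 0 ≤ M) :
    thf p ≤ q1 * 0.6932 * M / (1+a) := by
  have hq10 : (0:ℝ) ≤ q1 := le_trans (by positivity) hq1
  have h2 : (2:ℝ)^(2*p-1) ≤ q1 :=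
    le_trans (Real.rpow_le_rpow_of_exponent_le (by norm_num) (by linarith)) hq1
  have hl : (0:ℝ) < Real.log 2 := Real.log_pos (by norm_num)
  have hl2 : Real.log 2 ≤ 0.6932 := by linarith [Real.log_two_lt_d9]
  have hq0 : 0 ≤ p * (1 - p) := by nlinarith
  have hnum : (2:ℝ) ^ (2*p - 1) * Real.log 2 * (p * (1 - p)) ≤ q1 * 0.6932 * M := by
    apply mul_le_mul (mul_le_mul h2 hl2 hl.le hq10) hM hq0 (by positivity)
  rw [thf]
  apply div_le_div₀ (by positivity) hnum (by linarith) (by linarith)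

lemma K_le_int {p a b θq u : ℝ} (hp0 : 0 < p) (hp1 : p < 1) (hap : a ≤ p) (hpb : p ≤ b)
    (ha0 : 0 < a) (hb0 : 0 < b)
    (hθ : thf p ≤ θq) (hθq1 : θq < 1)
    (hγ1 : b/((1+a)*(1-θq)) ≤ 1)
    (hu : (b/((1+a)*(1-θq)))^a ≤ u) :
    Kf p ≤ u/(1+a) := by
  have hθ0 : 0 ≤ thf p := thf_nonneg hp0 hp1
  have hθp1 : thf p < 1 := lt_of_le_of_lt (thf_le hp0 hp1) (by norm_num)
  have hdenq : (0:ℝ) < (1+a)*(1-θq) := by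
    apply mul_pos (by linarith) (by linarith)
  have hγq0 : (0:ℝ) < b/((1+a)*(1-θq)) := div_pos hb0 hdenq
  have hden : (1+a)*(1-θq) ≤ (1+p)*(1-thf p) := by
    apply mul_le_mul (by linarith) (by linarith) (by linarith) (by linarith)
  have hγ : p/((1+p)*(1-thf p)) ≤ b/((1+a)*(1-θq)) :=
    div_le_div₀ hb0.le hpb hdenq hden
  have hbase0 : (0:ℝ) ≤ p/((1+p)*(1-thf p)) := by
    apply div_nonneg hp0.le
    nlinarith
  have hγp : (p/((1+p)*(1-thf p)))^p ≤ (b/((1+a)*(1-θq)))^p :=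
    Real.rpow_le_rpow hbase0 hγ hp0.le
  have hγa : (b/((1+a)*(1-θq)))^p ≤ (b/((1+a)*(1-θq)))^a :=
    Real.rpow_le_rpow_of_exponent_ge hγq0 hγ1 hap
  have hu0 : (0:ℝ) ≤ u := le_trans (by positivity) hu
  rw [Kf]
  apply div_le_div₀ hu0 (le_trans hγp (le_trans hγa hu)) (by linarith) (by linarith)

lemma B2_lower {p a b qe qb : ℝ} (hp0 : 0 < p) (hp1 : p < 1) (ha0 : 0 ≤ a) (hap : a ≤ p)
    (hpb : p ≤ b) (hb1 : b ≤ 1)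
    (hqe : qe ≤ (2:ℝ)^(-(a-1)^2*(a+1))) (hqe0 : 0 ≤ qe) (hqb : (2:ℝ)^(b-1) ≤ qb)
    (hbr : 0 ≤ (2*a+1)/(a+1) + qe/(1+b) - qb) :
    ((2*a+1)/(a+1) + qe/(1+b) - qb)/(1+b) ≤ B2e p := by
  have h1p : (0:ℝ) < 1 + p := by linarith
  have h1a : (0:ℝ) < 1 + a := by linarith
  have h1b : (0:ℝ) < 1 + b := by linarith
  have hT1 : (2*a+1)/(a+1) ≤ (2*p+1)/(p+1) := by
    rw [div_le_div_iff₀ (by linarith) (by linarith)]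
    nlinarith
  have hexp : -(a-1)^2*(a+1) ≤ -(p-1)^2*(p+1) := by
    nlinarith [mul_nonneg (sub_nonneg.2 hap)
      (by nlinarith : (0:ℝ) ≤ 1 + p + a - p^2 - p*a - a^2)]
  have hT2 : qe/(1+b) ≤ (2:ℝ)^(-(p-1)^2*(p+1))/(p+1) := by
    apply div_le_div₀ (by positivity)
      (le_trans hqe (Real.rpow_le_rpow_of_exponent_le (by norm_num) hexp))
      (by linarith) (by linarith)
  have hT3 : (2:ℝ)^(p-1) ≤ qb :=
    le_trans (Real.rpow_le_rpow_of_exponent_le (by norm_num) (by linarith)) hqb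
  have hS : (2*a+1)/(a+1) + qe/(1+b) - qb ≤
      (2*p+1)/(p+1) + (2:ℝ)^(-(p-1)^2*(p+1))/(p+1) - (2:ℝ)^(p-1) := by
    linarith [hT1, hT2, hT3]
  rw [B2e]
  calc ((2*a+1)/(a+1) + qe/(1+b) - qb)/(1+b)
      ≤ ((2*a+1)/(a+1) + qe/(1+b) - qb)/(1+p) := by
        apply div_le_div_of_nonneg_left hbr h1p (by linarith)
    _ ≤ ((2*p+1)/(p+1) + (2:ℝ)^(-(p-1)^2*(p+1))/(p+1) - (2:ℝ)^(p-1))/(1+p) := by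
        exact (div_le_div_iff_of_pos_right h1p).mpr hS
    _ = (1/(1+p)) * ((2*p+1)/(p+1) + (2:ℝ)^(-(p-1)^2*(p+1))/(p+1) - (2:ℝ)^(p-1)) := by ring

lemma two_pow_le_one_add {p : ℝ} (hp0 : 0 < p) (hp1 : p < 1) : (2:ℝ)^p ≤ 1 + p := by
  have hcx := convexOn_exp.2 (Set.mem_univ (0:ℝ)) (Set.mem_univ (Real.log 2))
    (by linarith : (0:ℝ) ≤ 1-p) hp0.le (by ring : (1-p)+p = 1)
  simp only [smul_eq_mul, mul_zero, zero_add, Real.exp_zero, Real.exp_log two_pos, mul_one] at hcx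
  rw [Real.rpow_def_of_pos (by norm_num : (0:ℝ) < 2)]
  calc Real.exp (Real.log 2 * p) = Real.exp (p * Real.log 2) := by ring_nf
    _ ≤ 1 - p + p * 2 := hcx
    _ = 1 + p := by ring

set_option maxHeartbeats 1000000 in
lemma small_case {p : ℝ} (hp0 : 0 < p) (hp14 : p ≤ 1/4) : Kf p + thf p ≤ B2e p := by
  have hp1 : p < 1 := by linarith
  have h1p : (0:ℝ) < 1 + p := by linarith
  have hl : (0:ℝ) < Real.log 2 := Real.log_pos (by norm_num)
  have hl2 : Real.log 2 ≤ 0.6932 := by linarith [Real.log_two_lt_d9]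
  have hl3 : (0.6931:ℝ) ≤ Real.log 2 := by linarith [Real.log_two_gt_d9]
  -- (a) thf p ≤ 0.4903 p
  have hsqrt : (2:ℝ)^(2*p-1) ≤ 0.7072 := by
    have h1 : (2:ℝ)^(2*p-1) ≤ (2:ℝ)^(-((1:ℝ)/2)) :=
      Real.rpow_le_rpow_of_exponent_le (by norm_num) (by linarith)
    have h2 : (2:ℝ)^(-(((1:ℕ):ℝ)/((2:ℕ):ℝ))) ≤ 0.7072 :=
      lem_rpow_neg_le 1 2 (by norm_num) (by norm_num) (by norm_num)
    have h3 : (-((1:ℝ)/2)) = (-(((1:ℕ):ℝ)/((2:ℕ):ℝ))) := by norm_num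
    rw [h3] at h1
    exact le_trans h1 h2
  have hq0 : 0 ≤ p * (1 - p) := by nlinarith
  have hθ : thf p ≤ 0.4903 * p := by
    rw [thf]
    have hnum : (2:ℝ) ^ (2*p-1) * Real.log 2 * (p * (1 - p)) ≤ 0.7072 * 0.6932 * (p*(1-p)) :=
      mul_le_mul (mul_le_mul hsqrt hl2 hl.le (by norm_num)) le_rfl hq0 (by norm_num)
    calc (2:ℝ) ^ (2*p-1) * Real.log 2 * (p * (1 - p)) / (1+p)
        ≤ 0.7072 * 0.6932 * (p*(1-p)) / (1+p) := (div_le_div_iff_of_pos_right h1p).mpr hnum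
      _ ≤ 0.4903 * p := by
          rw [div_le_iff₀ h1p]; nlinarith
  have hθ0 : 0 ≤ thf p := thf_nonneg hp0 hp1
  -- (b) Kf p ≤ 1/((1+1.3862 p)(1+p))
  have hlogp : Real.log p ≤ -1.3862 := by
    have h1 : Real.log p ≤ Real.log (1/4) := Real.log_le_log hp0 hp14
    have h2 : Real.log (1/4) = -(2 * Real.log 2) := by
      rw [show (1/4 : ℝ) = (2:ℝ)^(-2 : ℤ) by norm_num, Real.log_zpow]
      push_cast; ring
    rw [h2] at h1
    linarith
  have hK : Kf p ≤ 1/((1+1.3862*p)*(1+p)) := by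
    have hden : (1:ℝ) ≤ (1+p)*(1-thf p) := by nlinarith
    have hγp : p/((1+p)*(1-thf p)) ≤ p := by
      rw [div_le_iff₀ (by nlinarith)]; nlinarith
    have hbase0 : 0 ≤ p/((1+p)*(1-thf p)) := by
      apply div_nonneg hp0.le; nlinarith
    have h1 : (p/((1+p)*(1-thf p)))^p ≤ p^p :=
      Real.rpow_le_rpow hbase0 hγp hp0.le
    have h2 : p^p ≤ 1/(1+1.3862*p) := by
      rw [Real.rpow_def_of_pos hp0]
      have hx : 1 + 1.3862*p ≤ 1 - p * Real.log p := by nlinarith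
      have h3 : 1 - p * Real.log p ≤ Real.exp (-(Real.log p * p)) := by
        have := Real.add_one_le_exp (-(Real.log p * p))
        nlinarith [this]
      have h4 : Real.exp (Real.log p * p) * Real.exp (-(Real.log p * p)) = 1 := by
        rw [← Real.exp_add]; simp
      have h5 : (0:ℝ) < 1 + 1.3862*p := by nlinarith
      rw [le_div_iff₀ h5]
      calc Real.exp (Real.log p * p) * (1 + 1.3862*p)
          ≤ Real.exp (Real.log p * p) * (1 - p * Real.log p) := by
            apply mul_le_mul_of_nonneg_left hx (Real.exp_nonneg _)
        _ ≤ Real.exp (Real.log p * p) * Real.exp (-(Real.log p * p)) := by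
            apply mul_le_mul_of_nonneg_left h3 (Real.exp_nonneg _)
        _ = 1 := h4
    rw [Kf]
    calc (p/((1+p)*(1-thf p)))^p / (1+p) ≤ (1/(1+1.3862*p)) / (1+p) := by
          apply (div_le_div_iff_of_pos_right h1p).mpr (le_trans h1 h2)
      _ = 1/((1+1.3862*p)*(1+p)) := by
          rw [div_div]
  -- (c) B2e lower bound
  have hmid : (1 + 0.6931*p)/2 ≤ (2:ℝ)^(-(p-1)^2*(p+1)) := by
    have he : -(p-1)^2*(p+1) = (-1) + (p + p^2 - p^3) := by ring
    rw [he, Real.rpow_add (by norm_num : (0:ℝ) < 2), Real.rpow_neg_one]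
    have hs0 : p ≤ p + p^2 - p^3 := by nlinarith
    have h1 : 1 + 0.6931*p ≤ 1 + Real.log 2 * (p + p^2 - p^3) := by nlinarith
    have h2 : 1 + Real.log 2 * (p + p^2 - p^3) ≤ (2:ℝ)^(p + p^2 - p^3) := by
      rw [Real.rpow_def_of_pos (by norm_num : (0:ℝ) < 2)]
      linarith [Real.add_one_le_exp (Real.log 2 * (p + p^2 - p^3))]
    nlinarith [h1, h2]
  have h2pm : (2:ℝ)^(p-1) ≤ (1+p)/2 := by
    have : (2:ℝ)^(p-1) = (2:ℝ)^p * (2:ℝ)⁻¹ := by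
      rw [← Real.rpow_neg_one (2:ℝ), ← Real.rpow_add (by norm_num : (0:ℝ) < 2)]
      ring_nf
    rw [this]
    have h2p := two_pow_le_one_add hp0 hp1
    linarith
  have hB2 : (1/(1+p)) * ((2*p+1)/(p+1) + ((1 + 0.6931*p)/2)/(p+1) - (1+p)/2) ≤ B2e p := by
    rw [B2e]
    apply mul_le_mul_of_nonneg_left _ (by positivity)
    have h1 : ((1 + 0.6931*p)/2)/(p+1) ≤ (2:ℝ)^(-(p-1)^2*(p+1))/(p+1) :=
      (div_le_div_iff_of_pos_right (by linarith)).mpr hmid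
    linarith
  -- (d) final rational inequality
  have hfin : 1/((1+1.3862*p)*(1+p)) + 0.4903*p ≤
      (1/(1+p)) * ((2*p+1)/(p+1) + ((1 + 0.6931*p)/2)/(p+1) - (1+p)/2) := by
    have hp2 : p^2 ≤ p/4 := by nlinarith
    have hp3 : p^3 ≤ p/16 := by nlinarith
    have hp4 : p^4 ≤ p/64 := by nlinarith
    have hD1 : (0:ℝ) < 1+1.3862*p := by linarith
    have hG : (0:ℝ) ≤ (24849/10000)*p - (234933/400000)*p^2
        - (63567693/12500000)*p^3 - (33982693/25000000)*p^4 := by nlinarith [hp2, hp3, hp4]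
    have heq : (1/(1+p)) * ((2*p+1)/(p+1) + ((1 + 0.6931*p)/2)/(p+1) - (1+p)/2)
        - (1/((1+1.3862*p)*(1+p)) + 0.4903*p)
        = ((24849/10000)*p - (234933/400000)*p^2 - (63567693/12500000)*p^3
            - (33982693/25000000)*p^4) / (2*(1+1.3862*p)*(1+p)^2) := by
      field_simp
      ring
    have hpos : (0:ℝ) ≤ ((24849/10000)*p - (234933/400000)*p^2 - (63567693/12500000)*p^3
        - (33982693/25000000)*p^4) / (2*(1+1.3862*p)*(1+p)^2) := by
      apply div_nonneg hG
      positivity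
    linarith [heq.symm.le, heq.le, hpos]
  calc Kf p + thf p ≤ 1/((1+1.3862*p)*(1+p)) + 0.4903*p := by linarith
    _ ≤ (1/(1+p)) * ((2*p+1)/(p+1) + ((1 + 0.6931*p)/2)/(p+1) - (1+p)/2) := hfin
    _ ≤ B2e p := hB2


lemma interval_case {p a b M q1 u qe qb : ℝ}
    (hp0 : 0 < p) (hp1 : p < 1) (hap : a ≤ p) (hpb : p ≤ b)
    (ha0 : 0 < a) (hb1 : b ≤ 1)
    (hq1 : (2:ℝ)^(2*b-1) ≤ q1)
    (hM : p*(1-p) ≤ M) (hM0 : 0 ≤ M)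
    (hθq1 : q1 * 0.6932 * M / (1+a) < 1)
    (hγ1 : b/((1+a)*(1 - q1 * 0.6932 * M / (1+a))) ≤ 1)
    (hu : (b/((1+a)*(1 - q1 * 0.6932 * M / (1+a))))^(a:ℝ) ≤ u)
    (hqe : qe ≤ (2:ℝ)^(-(a-1)^2*(a+1))) (hqe0 : 0 ≤ qe)
    (hqb : (2:ℝ)^(b-1) ≤ qb)
    (hbr : 0 ≤ (2*a+1)/(a+1) + qe/(1+b) - qb)
    (hfin : u/(1+a) + q1 * 0.6932 * M / (1+a) ≤ ((2*a+1)/(a+1) + qe/(1+b) - qb)/(1+b)) :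
    Kf p + thf p ≤ B2e p := by
  have hθ := th_le_int hp0 hp1.le hap hpb ha0.le hq1 hM hM0
  have hb0 : (0:ℝ) < b := lt_of_lt_of_le ha0 (le_trans hap hpb)
  have hK := K_le_int hp0 hp1 hap hpb ha0 hb0 hθ hθq1 hγ1 hu
  have hB := B2_lower hp0 hp1 ha0.le hap hpb hb1 hqe hqe0 hqb hbr
  calc Kf p + thf p ≤ u/(1+a) + q1 * 0.6932 * M / (1+a) := by linarith
    _ ≤ ((2*a+1)/(a+1) + qe/(1+b) - qb)/(1+b) := hfin
    _ ≤ B2e p := hB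

lemma int_case_1 {p : ℝ} (hp0 : 0 < p) (hp1 : p < 1)
    (hap : (1/4 : ℝ) ≤ p) (hpb : p ≤ (3/8 : ℝ)) : Kf p + thf p ≤ B2e p := by
  have hq1 : (2:ℝ)^(2*(3/8 : ℝ)-1) ≤ (8409/10000 : ℝ) := by
    rw [show 2*(3/8 : ℝ)-1 = -(((1:ℕ):ℝ)/((4:ℕ):ℝ)) by norm_num]
    exact lem_rpow_neg_le 1 4 (by norm_num) (by norm_num) (by norm_num)
  have hM : p*(1-p) ≤ (15/64 : ℝ) := by
    nlinarith [mul_nonneg (sub_nonneg.2 hpb) (by linarith : (0:ℝ) ≤ 1 - (3/8 : ℝ) - p)]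
  have hu : ((3/8 : ℝ)/((1+(1/4 : ℝ))*(1 - (8409/10000 : ℝ) * 0.6932 * (15/64 : ℝ) / (1+(1/4 : ℝ)))))^((1/4 : ℝ):ℝ) ≤ (7619/10000 : ℝ) := by
    rw [show ((1/4 : ℝ):ℝ) = ((1:ℕ):ℝ)/((4:ℕ):ℝ) by norm_num]
    exact lem_rpow_le 1 4 (by norm_num) (by norm_num) (by norm_num) (by norm_num)
  have hqe : (3071/5000 : ℝ) ≤ (2:ℝ)^(-((1/4 : ℝ)-1)^2*((1/4 : ℝ)+1)) := by
    rw [show -((1/4 : ℝ)-1)^2*((1/4 : ℝ)+1) = -(((45:ℕ):ℝ)/((64:ℕ):ℝ)) by norm_num]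
    exact lem_le_rpow_neg 45 64 (by norm_num) (by norm_num) (by norm_num)
  have hqb : (2:ℝ)^((3/8 : ℝ)-(1:ℝ)) ≤ (1297/2000 : ℝ) := by
    rw [show (3/8 : ℝ)-(1:ℝ) = -(((5:ℕ):ℝ)/((8:ℕ):ℝ)) by norm_num]
    exact lem_rpow_neg_le 5 8 (by norm_num) (by norm_num) (by norm_num)
  exact interval_case hp0 hp1 hap hpb (by norm_num) (by norm_num) hq1 hM (by norm_num)
    (by norm_num) (by norm_num) hu hqe (by norm_num) hqb (by norm_num) (by norm_num)

lemma int_case_2 {p : ℝ} (hp0 : 0 < p) (hp1 : p < 1)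
    (hap : (3/8 : ℝ) ≤ p) (hpb : p ≤ (1/2 : ℝ)) : Kf p + thf p ≤ B2e p := by
  have hq1 : (2:ℝ)^(2*(1/2 : ℝ)-1) ≤ (1 : ℝ) := by
    rw [show 2*(1/2 : ℝ)-1 = (0:ℝ) by norm_num, Real.rpow_zero]
  have hM : p*(1-p) ≤ (1/4 : ℝ) := by
    nlinarith [mul_nonneg (sub_nonneg.2 hpb) (by linarith : (0:ℝ) ≤ 1 - (1/2 : ℝ) - p)]
  have hu : ((1/2 : ℝ)/((1+(3/8 : ℝ))*(1 - (1 : ℝ) * 0.6932 * (1/4 : ℝ) / (1+(3/8 : ℝ)))))^((3/8 : ℝ):ℝ) ≤ (3599/5000 : ℝ) := by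
    rw [show ((3/8 : ℝ):ℝ) = ((3:ℕ):ℝ)/((8:ℕ):ℝ) by norm_num]
    exact lem_rpow_le 3 8 (by norm_num) (by norm_num) (by norm_num) (by norm_num)
  have hqe : (6891/10000 : ℝ) ≤ (2:ℝ)^(-((3/8 : ℝ)-1)^2*((3/8 : ℝ)+1)) := by
    rw [show -((3/8 : ℝ)-1)^2*((3/8 : ℝ)+1) = -(((275:ℕ):ℝ)/((512:ℕ):ℝ)) by norm_num]
    exact lem_le_rpow_neg 275 512 (by norm_num) (by norm_num) (by rw [show (512:ℕ) = 2*256 from rfl, pow_mul, show (275:ℕ) = 256+19 from rfl, pow_add]; norm_num)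
  have hqb : (2:ℝ)^((1/2 : ℝ)-(1:ℝ)) ≤ (442/625 : ℝ) := by
    rw [show (1/2 : ℝ)-(1:ℝ) = -(((1:ℕ):ℝ)/((2:ℕ):ℝ)) by norm_num]
    exact lem_rpow_neg_le 1 2 (by norm_num) (by norm_num) (by norm_num)
  exact interval_case hp0 hp1 hap hpb (by norm_num) (by norm_num) hq1 hM (by norm_num)
    (by norm_num) (by norm_num) hu hqe (by norm_num) hqb (by norm_num) (by norm_num)

lemma int_case_3 {p : ℝ} (hp0 : 0 < p) (hp1 : p < 1)
    (hap : (1/2 : ℝ) ≤ p) (hpb : p ≤ (5/8 : ℝ)) : Kf p + thf p ≤ B2e p := by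
  have hq1 : (2:ℝ)^(2*(5/8 : ℝ)-1) ≤ (11893/10000 : ℝ) := by
    rw [show 2*(5/8 : ℝ)-1 = ((1:ℕ):ℝ)/((4:ℕ):ℝ) by norm_num]
    exact lem_rpow_le 1 4 (by norm_num) (by norm_num) (by norm_num) (by norm_num)
  have hM : p*(1-p) ≤ (1/4 : ℝ) := by
    nlinarith [mul_nonneg (sub_nonneg.2 hap) (by linarith : (0:ℝ) ≤ p + (1/2 : ℝ) - 1)]
  have hu : ((5/8 : ℝ)/((1+(1/2 : ℝ))*(1 - (11893/10000 : ℝ) * 0.6932 * (1/4 : ℝ) / (1+(1/2 : ℝ)))))^((1/2 : ℝ):ℝ) ≤ (6951/10000 : ℝ) := by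
    rw [show ((1/2 : ℝ):ℝ) = ((1:ℕ):ℝ)/((2:ℕ):ℝ) by norm_num]
    exact lem_rpow_le 1 2 (by norm_num) (by norm_num) (by norm_num) (by norm_num)
  have hqe : (7711/10000 : ℝ) ≤ (2:ℝ)^(-((1/2 : ℝ)-1)^2*((1/2 : ℝ)+1)) := by
    rw [show -((1/2 : ℝ)-1)^2*((1/2 : ℝ)+1) = -(((3:ℕ):ℝ)/((8:ℕ):ℝ)) by norm_num]
    exact lem_le_rpow_neg 3 8 (by norm_num) (by norm_num) (by norm_num)
  have hqb : (2:ℝ)^((5/8 : ℝ)-(1:ℝ)) ≤ (482/625 : ℝ) := by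
    rw [show (5/8 : ℝ)-(1:ℝ) = -(((3:ℕ):ℝ)/((8:ℕ):ℝ)) by norm_num]
    exact lem_rpow_neg_le 3 8 (by norm_num) (by norm_num) (by norm_num)
  exact interval_case hp0 hp1 hap hpb (by norm_num) (by norm_num) hq1 hM (by norm_num)
    (by norm_num) (by norm_num) hu hqe (by norm_num) hqb (by norm_num) (by norm_num)

lemma int_case_4 {p : ℝ} (hp0 : 0 < p) (hp1 : p < 1)
    (hap : (5/8 : ℝ) ≤ p) (hpb : p ≤ (3/4 : ℝ)) : Kf p + thf p ≤ B2e p := by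
  have hq1 : (2:ℝ)^(2*(3/4 : ℝ)-1) ≤ (14143/10000 : ℝ) := by
    rw [show 2*(3/4 : ℝ)-1 = ((1:ℕ):ℝ)/((2:ℕ):ℝ) by norm_num]
    exact lem_rpow_le 1 2 (by norm_num) (by norm_num) (by norm_num) (by norm_num)
  have hM : p*(1-p) ≤ (15/64 : ℝ) := by
    nlinarith [mul_nonneg (sub_nonneg.2 hap) (by linarith : (0:ℝ) ≤ p + (5/8 : ℝ) - 1)]
  have hu : ((3/4 : ℝ)/((1+(5/8 : ℝ))*(1 - (14143/10000 : ℝ) * 0.6932 * (15/64 : ℝ) / (1+(5/8 : ℝ)))))^((5/8 : ℝ):ℝ) ≤ (1357/2000 : ℝ) := by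
    rw [show ((5/8 : ℝ):ℝ) = ((5:ℕ):ℝ)/((8:ℕ):ℝ) by norm_num]
    exact lem_rpow_le 5 8 (by norm_num) (by norm_num) (by norm_num) (by norm_num)
  have hqe : (1707/2000 : ℝ) ≤ (2:ℝ)^(-((5/8 : ℝ)-1)^2*((5/8 : ℝ)+1)) := by
    rw [show -((5/8 : ℝ)-1)^2*((5/8 : ℝ)+1) = -(((117:ℕ):ℝ)/((512:ℕ):ℝ)) by norm_num]
    exact lem_le_rpow_neg 117 512 (by norm_num) (by norm_num) (by rw [show (512:ℕ) = 2*256 from rfl, pow_mul]; norm_num)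
  have hqb : (2:ℝ)^((3/4 : ℝ)-(1:ℝ)) ≤ (8409/10000 : ℝ) := by
    rw [show (3/4 : ℝ)-(1:ℝ) = -(((1:ℕ):ℝ)/((4:ℕ):ℝ)) by norm_num]
    exact lem_rpow_neg_le 1 4 (by norm_num) (by norm_num) (by norm_num)
  exact interval_case hp0 hp1 hap hpb (by norm_num) (by norm_num) hq1 hM (by norm_num)
    (by norm_num) (by norm_num) hu hqe (by norm_num) hqb (by norm_num) (by norm_num)

lemma int_case_5 {p : ℝ} (hp0 : 0 < p) (hp1 : p < 1)
    (hap : (3/4 : ℝ) ≤ p) (hpb : p ≤ (7/8 : ℝ)) : Kf p + thf p ≤ B2e p := by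
  have hq1 : (2:ℝ)^(2*(7/8 : ℝ)-1) ≤ (8409/5000 : ℝ) := by
    rw [show 2*(7/8 : ℝ)-1 = ((3:ℕ):ℝ)/((4:ℕ):ℝ) by norm_num]
    exact lem_rpow_le 3 4 (by norm_num) (by norm_num) (by norm_num) (by norm_num)
  have hM : p*(1-p) ≤ (3/16 : ℝ) := by
    nlinarith [mul_nonneg (sub_nonneg.2 hap) (by linarith : (0:ℝ) ≤ p + (3/4 : ℝ) - 1)]
  have hu : ((7/8 : ℝ)/((1+(3/4 : ℝ))*(1 - (8409/5000 : ℝ) * 0.6932 * (3/16 : ℝ) / (1+(3/4 : ℝ)))))^((3/4 : ℝ):ℝ) ≤ (1643/2500 : ℝ) := by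
    rw [show ((3/4 : ℝ):ℝ) = ((3:ℕ):ℝ)/((4:ℕ):ℝ) by norm_num]
    exact lem_rpow_le 3 4 (by norm_num) (by norm_num) (by norm_num) (by norm_num)
  have hqe : (9269/10000 : ℝ) ≤ (2:ℝ)^(-((3/4 : ℝ)-1)^2*((3/4 : ℝ)+1)) := by
    rw [show -((3/4 : ℝ)-1)^2*((3/4 : ℝ)+1) = -(((7:ℕ):ℝ)/((64:ℕ):ℝ)) by norm_num]
    exact lem_le_rpow_neg 7 64 (by norm_num) (by norm_num) (by norm_num)
  have hqb : (2:ℝ)^((7/8 : ℝ)-(1:ℝ)) ≤ (9171/10000 : ℝ) := by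
    rw [show (7/8 : ℝ)-(1:ℝ) = -(((1:ℕ):ℝ)/((8:ℕ):ℝ)) by norm_num]
    exact lem_rpow_neg_le 1 8 (by norm_num) (by norm_num) (by norm_num)
  exact interval_case hp0 hp1 hap hpb (by norm_num) (by norm_num) hq1 hM (by norm_num)
    (by norm_num) (by norm_num) hu hqe (by norm_num) hqb (by norm_num) (by norm_num)

lemma int_case_6 {p : ℝ} (hp0 : 0 < p) (hp1 : p < 1)
    (hap : (7/8 : ℝ) ≤ p) (hpb : p ≤ (1 : ℝ)) : Kf p + thf p ≤ B2e p := by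
  have hq1 : (2:ℝ)^(2*(1 : ℝ)-1) ≤ (2 : ℝ) := by
    rw [show 2*(1 : ℝ)-1 = (1:ℝ) by norm_num, Real.rpow_one]
  have hM : p*(1-p) ≤ (7/64 : ℝ) := by
    nlinarith [mul_nonneg (sub_nonneg.2 hap) (by linarith : (0:ℝ) ≤ p + (7/8 : ℝ) - 1)]
  have hu : ((1 : ℝ)/((1+(7/8 : ℝ))*(1 - (2 : ℝ) * 0.6932 * (7/64 : ℝ) / (1+(7/8 : ℝ)))))^((7/8 : ℝ):ℝ) ≤ (1553/2500 : ℝ) := by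
    rw [show ((7/8 : ℝ):ℝ) = ((7:ℕ):ℝ)/((8:ℕ):ℝ) by norm_num]
    exact lem_rpow_le 7 8 (by norm_num) (by norm_num) (by norm_num) (by norm_num)
  have hqe : (4899/5000 : ℝ) ≤ (2:ℝ)^(-((7/8 : ℝ)-1)^2*((7/8 : ℝ)+1)) := by
    rw [show -((7/8 : ℝ)-1)^2*((7/8 : ℝ)+1) = -(((15:ℕ):ℝ)/((512:ℕ):ℝ)) by norm_num]
    exact lem_le_rpow_neg 15 512 (by norm_num) (by norm_num) (by rw [show (512:ℕ) = 2*256 from rfl, pow_mul]; norm_num)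
  have hqb : (2:ℝ)^((1 : ℝ)-(1:ℝ)) ≤ (1 : ℝ) := by
    rw [show (1 : ℝ)-(1:ℝ) = (0:ℝ) by norm_num, Real.rpow_zero]
  exact interval_case hp0 hp1 hap hpb (by norm_num) (by norm_num) hq1 hM (by norm_num)
    (by norm_num) (by norm_num) hu hqe (by norm_num) hqb (by norm_num) (by norm_num)


lemma scalar_main {p : ℝ} (hp0 : 0 < p) (hp1 : p < 1) : Kf p + thf p ≤ B2e p := by
  rcases le_or_gt p (1/4) with h|h
  · exact small_case hp0 h
  rcases le_or_gt p (3/8) with h2|h2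
  · exact int_case_1 hp0 hp1 h.le h2
  rcases le_or_gt p (1/2) with h3|h3
  · exact int_case_2 hp0 hp1 h2.le h3
  rcases le_or_gt p (5/8) with h4|h4
  · exact int_case_3 hp0 hp1 h3.le h4
  rcases le_or_gt p (3/4) with h5|h5
  · exact int_case_4 hp0 hp1 h4.le h5
  rcases le_or_gt p (7/8) with h6|h6
  · exact int_case_5 hp0 hp1 h5.le h6
  · exact int_case_6 hp0 hp1 h6.le hp1.le


/-- Lemma 4: for `m_c = m_{c2}/m_{c1} < 1` a ratio of positive odd integers and
the constants `β₁, β₂` given in the paper,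
`χt (χ - χt)^{m_c} ≤ -β₁ χt^{1+m_c} + β₂ χ^{1+m_c}`, where `(·)^{m_c}` is the
signed real power and `x^{1+m_c} = |x|^{1+m_c}` (even numerator over odd
denominator). -/
theorem signed_power_cross_term_bound
    (mc1 mc2 : ℕ) (h1 : Odd mc1) (h2 : Odd mc2) (h1p : 0 < mc1) (h2p : 0 < mc2)
    (mc : ℝ) (hmc : mc = (mc2 : ℝ) / (mc1 : ℝ)) (hmclt : mc < 1)
    (β₁ β₂ : ℝ)
    (hβ₁ : β₁ = (1 / (1 + mc)) * ((2 : ℝ) ^ (mc - 1) - (2 : ℝ) ^ ((mc - 1) * (mc + 1))))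
    (hβ₂ : β₂ = (1 / (1 + mc)) * ((2 * mc + 1) / (mc + 1) +
        (2 : ℝ) ^ (-(mc - 1) ^ 2 * (mc + 1)) / (mc + 1) - (2 : ℝ) ^ (mc - 1)))
    (χt χ : ℝ) :
    χt * signedRpow (χ - χt) mc ≤ -β₁ * |χt| ^ (1 + mc) + β₂ * |χ| ^ (1 + mc) := by
  have hp0 : 0 < mc := by
    rw [hmc]
    apply div_pos
    · exact_mod_cast h2p
    · exact_mod_cast h1p
  have hpt := pointwise hp0 hmclt χt χ
  have hb1 := B1_le hp0 hmclt
  have hb2 := scalar_main hp0 hmclt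
  rw [B2e] at hb2
  have hX : (0:ℝ) ≤ |χt| ^ (1+mc) := Real.rpow_nonneg (abs_nonneg _) _
  have hY : (0:ℝ) ≤ |χ| ^ (1+mc) := Real.rpow_nonneg (abs_nonneg _) _
  have h3 := mul_le_mul_of_nonneg_right hb1 hX
  have h4 := mul_le_mul_of_nonneg_right hb2 hY
  rw [hβ₁, hβ₂]
  linarith
end

section
/- Let $n \ge 1$ be an integer and $0 < c_1 < c_2$. Define $\varpi : \mathbb{R} \to \mathbb{R}$ by $\varpi(\eta) = 1$ for $|\eta| \le c_1$, $\varpi(\eta) = \cos^n\!\big( \tfrac{\pi}{2} \sin^n\!\big( \tfrac{\pi}{2} \tfrac{\eta^2 - c_1^2}{c_2^2 - c_1^2} \big) \big)$ for $c_1 < |\eta| < c_2$, and $\varpi(\eta) = 0$ for $|\eta| \ge c_2$. Then $\varpi$ is $n$-times continuously differentiable on $\mathbb{R}$ and takes values in $[0,1]$. -/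
open Real
open scoped ContDiff

namespace SwitchAux

/-- `V a m f`: `f` is smooth and vanishes to order at least `m` at `a`. -/
def V (a : ℝ) : ℕ → (ℝ → ℝ) → Prop
  | 0, f => ContDiff ℝ ∞ f
  | m + 1, f => ContDiff ℝ ∞ f ∧ f a = 0 ∧ V a m (deriv f)

variable {a : ℝ} {m k : ℕ} {f g : ℝ → ℝ}

lemma V.smooth (h : V a m f) : ContDiff ℝ ∞ f := by
  cases m with
  | zero => exact h
  | succ m => exact h.1

lemma V_zero (hf : ContDiff ℝ ∞ f) : V a 0 f := hf

lemma one_le_inf : (1 : WithTop ℕ∞) ≤ ∞ := by exact_mod_cast (le_top : (1:ℕ∞) ≤ ⊤)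

lemma ContDiffInf.differentiable (hf : ContDiff ℝ ∞ f) : Differentiable ℝ f :=
  hf.differentiable (by simp)

lemma smooth_deriv (hf : ContDiff ℝ ∞ f) : ContDiff ℝ ∞ (deriv f) :=
  (contDiff_infty_iff_deriv.mp hf).2

lemma V.mono : ∀ {m k : ℕ} {f : ℝ → ℝ}, k ≤ m → V a m f → V a k f := by
  intro m
  induction m with
  | zero => intro k f hk hf; rw [Nat.le_zero.mp hk]; exact hf
  | succ m ih =>
    intro k f hk hf
    cases k with
    | zero => exact hf.smooth
    | succ k => exact ⟨hf.1, hf.2.1, ih (Nat.succ_le_succ_iff.mp hk) hf.2.2⟩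

lemma deriv_fun_add (hf : ContDiff ℝ ∞ f) (hg : ContDiff ℝ ∞ g) :
    deriv (fun x => f x + g x) = fun x => deriv f x + deriv g x :=
  funext fun x => _root_.deriv_fun_add (hf.differentiable (by simp) x) (hg.differentiable (by simp) x)

lemma V.add : ∀ {m : ℕ} {f g : ℝ → ℝ}, V a m f → V a m g → V a m (fun x => f x + g x) := by
  intro m
  induction m with
  | zero => intro f g hf hg; exact ContDiff.add hf hg
  | succ m ih =>
    intro f g hf hg
    refine ⟨hf.1.add hg.1, by simp [hf.2.1, hg.2.1], ?_⟩
    rw [deriv_fun_add hf.1 hg.1]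
    exact ih hf.2.2 hg.2.2

lemma deriv_fun_mul (hf : ContDiff ℝ ∞ f) (hg : ContDiff ℝ ∞ g) :
    deriv (fun x => f x * g x) = fun x => deriv f x * g x + f x * deriv g x :=
  funext fun x => _root_.deriv_fun_mul (hf.differentiable (by simp) x) (hg.differentiable (by simp) x)

lemma V_mul_aux : ∀ (N m k : ℕ) (f g : ℝ → ℝ), m + k ≤ N → V a m f → V a k g →
    V a (m + k) (fun x => f x * g x) := by
  intro N
  induction N with
  | zero =>
    intro m k f g hN hf hg
    obtain ⟨hm, hk⟩ : m = 0 ∧ k = 0 := by omega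
    subst hm; subst hk
    exact ContDiff.mul hf hg
  | succ N ih =>
    intro m k f g hN hf hg
    match m, k with
    | 0, 0 => exact ContDiff.mul hf hg
    | 0, (j+1) =>
      refine ⟨hf.smooth.mul hg.1, by simp [hg.2.1], ?_⟩
      rw [deriv_fun_mul hf.smooth hg.1]
      have h1 : V a j (fun x => deriv f x * g x) := by
        have := ih 0 j (deriv f) g (by omega) (V_zero (smooth_deriv hf.smooth)) (hg.mono (by omega))
        simpa using this
      have h2 : V a j (fun x => f x * deriv g x) := by
        have := ih 0 j f (deriv g) (by omega) (V_zero hf.smooth) hg.2.2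
        simpa using this
      simpa using h1.add h2
    | (i+1), k =>
      have hksm : ContDiff ℝ ∞ g := hg.smooth
      rw [show i + 1 + k = (i + k) + 1 from by omega]
      refine ⟨hf.1.mul hksm, by show f a * g a = 0; simp [hf.2.1], ?_⟩
      rw [deriv_fun_mul hf.1 hksm]
      have h1 : V a (i + k) (fun x => deriv f x * g x) := ih i k (deriv f) g (by omega) hf.2.2 hg
      have h2 : V a (i + k) (fun x => f x * deriv g x) := by
        cases k with
        | zero =>
          have := ih i 0 f (deriv g) (by omega) (hf.mono (by omega)) (V_zero (smooth_deriv hksm))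
          simpa using this
        | succ j =>
          have := ih (i+1) j f (deriv g) (by omega) hf hg.2.2
          rw [show i + (j+1) = i + 1 + j from by omega]
          exact this
      exact h1.add h2

lemma V.mul (hf : V a m f) (hg : V a k g) : V a (m + k) (fun x => f x * g x) :=
  V_mul_aux (m + k) m k f g le_rfl hf hg

lemma V.pow : ∀ (p : ℕ), V a m f → V a (p * m) (fun x => f x ^ p) := by
  intro p
  induction p with
  | zero => intro _; simpa using V_zero contDiff_const
  | succ p ih =>
    intro hf
    have := hf.mul (ih hf)
    have harith : (p + 1) * m = m + p * m := by ring
    rw [harith]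
    convert this using 2 with x
    ring

lemma deriv_fun_comp (hg : ContDiff ℝ ∞ g) (hf : ContDiff ℝ ∞ f) :
    deriv (fun x => g (f x)) = fun x => deriv g (f x) * deriv f x :=
  funext fun x => deriv_comp x (hg.differentiable (by simp) (f x)) (hf.differentiable (by simp) x)

lemma V.comp : ∀ {m : ℕ} {f : ℝ → ℝ}, ContDiff ℝ ∞ g → g 0 = 0 → V a m f →
    V a m (fun x => g (f x)) := by
  intro m
  induction m with
  | zero => intro f hg _ hf; exact hg.comp hf
  | succ m ih =>
    intro f hg hg0 hf
    refine ⟨hg.comp hf.1, by show g (f a) = 0; rw [hf.2.1, hg0], ?_⟩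
    rw [deriv_fun_comp hg hf.1]
    have h1 : V a 0 (fun x => deriv g (f x)) := V_zero ((smooth_deriv hg).comp hf.1)
    have := h1.mul hf.2.2
    simpa using this

lemma V.comp2 (hg : ContDiff ℝ ∞ g) (hg0 : g 0 = 0) (hg1 : deriv g 0 = 0)
    (hf : V a m f) : V a (2 * m) (fun x => g (f x)) := by
  cases m with
  | zero => exact V_zero (hg.comp hf)
  | succ m =>
    rw [show 2 * (m + 1) = (m + 1 + m) + 1 from by omega]
    refine ⟨hg.comp hf.1, by show g (f a) = 0; rw [hf.2.1, hg0], ?_⟩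
    rw [deriv_fun_comp hg hf.1]
    have h1 : V a (m + 1) (fun x => deriv g (f x)) := hf.comp (smooth_deriv hg) hg1
    exact h1.mul hf.2.2

lemma V.iteratedDeriv_eq_zero : ∀ (j : ℕ) {m : ℕ} {f : ℝ → ℝ}, V a m f → j < m →
    iteratedDeriv j f a = 0 := by
  intro j
  induction j with
  | zero =>
    intro m f hf hm
    match m, hm with
    | (m+1), _ => simpa using hf.2.1
  | succ j ih =>
    intro m f hf hm
    match m, hm with
    | (m+1), hm =>
      rw [iteratedDeriv_succ']
      exact ih hf.2.2 (by omega)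


/-- Gluing two `C^k` functions at a point where all derivatives up to order `k` agree. -/
lemma glue : ∀ (k : ℕ) (f g : ℝ → ℝ), ContDiff ℝ (k : ℕ∞) f → ContDiff ℝ (k : ℕ∞) g →
    (∀ j ≤ k, iteratedDeriv j f a = iteratedDeriv j g a) →
    ContDiff ℝ (k : ℕ∞) (fun x => if x ≤ a then f x else g x) := by
  intro k
  induction k with
  | zero =>
    intro f g hf hg h
    have h0 : f a = g a := by simpa [iteratedDeriv_zero] using h 0 le_rfl
    rw [show (((0:ℕ) : ℕ∞) : WithTop ℕ∞) = 0 from by norm_cast, contDiff_zero]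
    exact Continuous.if_le (by exact_mod_cast hf.continuous) (by exact_mod_cast hg.continuous)
      continuous_id continuous_const (fun x hx => by rw [show x = a from hx]; exact h0)
  | succ k ih =>
    intro f g hf hg h
    have hcast : (((k+1:ℕ) : ℕ∞) : WithTop ℕ∞) = ((k : ℕ∞) : WithTop ℕ∞) + 1 := by
      push_cast; ring
    rw [hcast] at hf hg ⊢
    have hfd : Differentiable ℝ f := (contDiff_succ_iff_deriv.mp hf).1
    have hgd : Differentiable ℝ g := (contDiff_succ_iff_deriv.mp hg).1
    have hfg : f a = g a := by simpa [iteratedDeriv_zero] using h 0 (by omega)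
    have hfg' : deriv f a = deriv g a := by simpa [iteratedDeriv_one] using h 1 (by omega)
    set φ : ℝ → ℝ := fun x => if x ≤ a then f x else g x with hφ
    have hkey : HasDerivAt φ (deriv f a) a := by
      have h1 : HasDerivWithinAt φ (deriv f a) (Set.Iic a) a :=
        ((hfd a).hasDerivAt.hasDerivWithinAt).congr
          (fun x hx => by simp [hφ, Set.mem_Iic.mp hx]) (by simp [hφ])
      have h2 : HasDerivWithinAt φ (deriv f a) (Set.Ici a) a := by
        rw [hfg']
        refine ((hgd a).hasDerivAt.hasDerivWithinAt).congr (fun x hx => ?_) (by simp [hφ, hfg])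
        rcases eq_or_lt_of_le (Set.mem_Ici.mp hx) with hxa | hxa
        · simp [hφ, ← hxa, hfg]
        · simp [hφ, not_le.mpr hxa]
      have := h1.union h2
      rwa [Set.Iic_union_Ici, hasDerivWithinAt_univ] at this
    have hfev : ∀ x, x < a → φ =ᶠ[nhds x] f := fun x hx =>
      Filter.eventuallyEq_of_mem (Iio_mem_nhds hx) (fun y hy => by
        simp [hφ, le_of_lt (Set.mem_Iio.mp hy)])
    have hgev : ∀ x, a < x → φ =ᶠ[nhds x] g := fun x hx =>
      Filter.eventuallyEq_of_mem (Ioi_mem_nhds hx) (fun y hy => by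
        simp [hφ, not_le.mpr (Set.mem_Ioi.mp hy)])
    have hdiff : Differentiable ℝ φ := by
      intro x
      rcases lt_trichotomy x a with hx | hx | hx
      · exact (hfd x).congr_of_eventuallyEq (hfev x hx)
      · rw [hx]; exact hkey.differentiableAt
      · exact (hgd x).congr_of_eventuallyEq (hgev x hx)
    have hderiv : deriv φ = fun x => if x ≤ a then deriv f x else deriv g x := by
      funext x
      rcases lt_trichotomy x a with hx | hx | hx
      · rw [Filter.EventuallyEq.deriv_eq (hfev x hx), if_pos (le_of_lt hx)]
      · rw [hx, hkey.deriv, if_pos le_rfl]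
      · rw [Filter.EventuallyEq.deriv_eq (hgev x hx), if_neg (not_le.mpr hx)]
    refine contDiff_succ_iff_deriv.mpr ⟨hdiff, by simp, ?_⟩
    rw [hderiv]
    exact ih (deriv f) (deriv g) (contDiff_succ_iff_deriv.mp hf).2.2
      (contDiff_succ_iff_deriv.mp hg).2.2
      (fun j hj => by
        rw [← iteratedDeriv_succ', ← iteratedDeriv_succ']
        exact h (j+1) (by omega))


lemma iter_const : ∀ (j : ℕ) (c x : ℝ), iteratedDeriv (j + 1) (fun _ : ℝ => c) x = 0 := by
  intro j
  induction j with
  | zero => intro c x; rw [iteratedDeriv_one, deriv_const]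
  | succ j ih =>
    intro c x
    rw [iteratedDeriv_succ', deriv_const']
    exact ih 0 x

end SwitchAux

open SwitchAux

section Main

variable {n : ℕ}

private noncomputable def Ffun (n : ℕ) : ℝ → ℝ :=
  fun s => (Real.cos ((π / 2) * (Real.sin ((π / 2) * s)) ^ n)) ^ n

private lemma smooth_Ffun : ContDiff ℝ ∞ (Ffun n) := by
  unfold Ffun
  exact (Real.contDiff_cos.comp
    (contDiff_const.mul ((Real.contDiff_sin.comp (contDiff_const.mul contDiff_id)).pow n))).pow n

private lemma vanish0 (hn : 1 ≤ n) : V 0 (2 * n) (fun s => Ffun n s - 1) := by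
  have hsin : ContDiff ℝ ∞ (fun s : ℝ => Real.sin ((π / 2) * s)) :=
    Real.contDiff_sin.comp (contDiff_const.mul contDiff_id)
  have h0 : V 0 1 (fun s : ℝ => Real.sin ((π / 2) * s)) :=
    ⟨hsin, by simp, V_zero (smooth_deriv hsin)⟩
  have hy : V 0 n (fun s : ℝ => (π / 2) * (Real.sin ((π / 2) * s)) ^ n) := by
    have := (V_zero (a := 0) (f := fun _ : ℝ => (π/2 : ℝ)) contDiff_const).mul (h0.pow n)
    simpa using this
  have hg2smooth : ContDiff ℝ ∞ (fun t : ℝ => Real.cos t ^ n - 1) :=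
    (Real.contDiff_cos.pow n).sub contDiff_const
  have hg20 : (fun t : ℝ => Real.cos t ^ n - 1) 0 = 0 := by simp
  have hD : HasDerivAt (fun t : ℝ => Real.cos t ^ n - 1)
      ((n : ℝ) * Real.cos 0 ^ (n - 1) * (-Real.sin 0)) 0 :=
    ((Real.hasDerivAt_cos 0).pow n).sub_const 1
  have hg21 : deriv (fun t : ℝ => Real.cos t ^ n - 1) 0 = 0 := by
    rw [hD.deriv]; simp
  exact V.comp2 hg2smooth hg20 hg21 hy

private lemma vanish1 (hn : 1 ≤ n) : V 1 (n * 2) (Ffun n) := by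
  set u₁ : ℝ → ℝ := fun s => (π / 2) * (Real.sin ((π / 2) * s)) ^ n - π / 2 with hu₁
  have hsmooth : ContDiff ℝ ∞ u₁ :=
    ((contDiff_const.mul ((Real.contDiff_sin.comp (contDiff_const.mul contDiff_id)).pow n))).sub
      contDiff_const
  have hval : u₁ 1 = 0 := by simp [hu₁]
  have hsin1 : HasDerivAt (fun s : ℝ => Real.sin ((π / 2) * s))
      (Real.cos ((π / 2) * 1) * ((π / 2) * 1)) 1 := by
    have hinner : HasDerivAt (fun s : ℝ => (π / 2) * s) ((π / 2) * 1) 1 :=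
      (hasDerivAt_id 1).const_mul (π / 2)
    simpa [Function.comp_def] using (Real.hasDerivAt_sin ((π / 2) * 1)).comp 1 hinner
  have hDu : HasDerivAt u₁
      ((π / 2) * ((n : ℝ) * (Real.sin ((π / 2) * 1)) ^ (n - 1) *
        (Real.cos ((π / 2) * 1) * ((π / 2) * 1)))) 1 :=
    ((hsin1.pow n).const_mul (π / 2)).sub_const (π / 2)
  have hderiv1 : deriv u₁ 1 = 0 := by
    rw [hDu.deriv]; simp [Real.cos_pi_div_two]
  have hu : V 1 2 u₁ :=
    ⟨hsmooth, hval, ⟨smooth_deriv hsmooth, hderiv1, V_zero (smooth_deriv (smooth_deriv hsmooth))⟩⟩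
  have hw : V 1 2 (fun s => -Real.sin (u₁ s)) :=
    hu.comp (g := fun v => -Real.sin v) Real.contDiff_sin.neg (by simp)
  have := hw.pow n
  have heq : (fun s => (-Real.sin (u₁ s)) ^ n) = Ffun n := by
    funext s
    have : u₁ s = (π / 2) * (Real.sin ((π / 2) * s)) ^ n - π / 2 := rfl
    rw [this, Real.sin_sub_pi_div_two, neg_neg, Ffun]
  rwa [heq] at this

end Main

section Assembly

private lemma match0 (n : ℕ) (hn : 1 ≤ n) :
    ∀ j ≤ n, iteratedDeriv j (fun _ : ℝ => (1:ℝ)) 0 = iteratedDeriv j (Ffun n) 0 := by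
  intro j hj
  cases j with
  | zero =>
    rw [iteratedDeriv_zero, iteratedDeriv_zero, Ffun]
    simp [zero_pow (by omega : n ≠ 0)]
  | succ j =>
    rw [iter_const]
    have hder : deriv (Ffun n) = deriv (fun s => Ffun n s - 1) := by
      funext s
      rw [deriv_sub_const]
    rw [iteratedDeriv_succ', hder, ← iteratedDeriv_succ']
    exact ((vanish0 hn).iteratedDeriv_eq_zero (j+1) (by omega)).symm

private lemma match1 (n : ℕ) (hn : 1 ≤ n) :
    ∀ j ≤ n, iteratedDeriv j (Ffun n) 1 = iteratedDeriv j (fun _ : ℝ => (0:ℝ)) 1 := by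
  intro j hj
  have hL : iteratedDeriv j (Ffun n) 1 = 0 :=
    (vanish1 hn).iteratedDeriv_eq_zero j (by omega)
  cases j with
  | zero => rw [hL, iteratedDeriv_zero]
  | succ j => rw [hL, iter_const]

end Assembly

/-- The smooth switching (bump-type) function used in the switch indicator:
equal to `1` on `[-c₁, c₁]`, equal to
`cosⁿ((π/2) sinⁿ((π/2)(η² - c₁²)/(c₂² - c₁²)))` on the transition region, and
equal to `0` outside `(-c₂, c₂)`.  It is `n`-times continuously differentiable
and takes values in `[0,1]`. -/
theorem switching_function_smooth_and_bounded
    (n : ℕ) (hn : 1 ≤ n) (c₁ c₂ : ℝ) (hc₁ : 0 < c₁) (hc₁₂ : c₁ < c₂)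
    (ϖ : ℝ → ℝ)
    (h_inner : ∀ η : ℝ, |η| ≤ c₁ → ϖ η = 1)
    (h_mid : ∀ η : ℝ, c₁ < |η| → |η| < c₂ →
      ϖ η = (Real.cos ((π / 2) *
        (Real.sin ((π / 2) * ((η ^ 2 - c₁ ^ 2) / (c₂ ^ 2 - c₁ ^ 2)))) ^ n)) ^ n)
    (h_outer : ∀ η : ℝ, c₂ ≤ |η| → ϖ η = 0) :
    ContDiff ℝ (n : ℕ∞) ϖ ∧ ∀ η : ℝ, ϖ η ∈ Set.Icc (0 : ℝ) 1 := by
  have hle : (((n : ℕ∞)) : WithTop ℕ∞) ≤ ∞ := by exact_mod_cast (le_top : (n : ℕ∞) ≤ ⊤)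
  have hFn : ContDiff ℝ (n : ℕ∞) (Ffun n) := smooth_Ffun.of_le hle
  have hF1 : Ffun n 1 = 0 := by
    rw [Ffun]
    simp [Real.cos_pi_div_two, zero_pow (by omega : n ≠ 0)]
  -- inner glued function at 1
  set G₁ : ℝ → ℝ := fun t => if t ≤ 1 then Ffun n t else (fun _ : ℝ => (0:ℝ)) t with hG₁def
  have hG₁ : ContDiff ℝ (n : ℕ∞) G₁ :=
    glue n (Ffun n) (fun _ => (0:ℝ)) hFn (contDiff_const.of_le hle) (match1 n hn)
  have hG₁ev : G₁ =ᶠ[nhds (0:ℝ)] Ffun n :=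
    Filter.eventuallyEq_of_mem (Iio_mem_nhds (by norm_num : (0:ℝ) < 1))
      (fun y hy => by simp [hG₁def, le_of_lt (Set.mem_Iio.mp hy)])
  set G : ℝ → ℝ := fun t => if t ≤ 0 then (fun _ : ℝ => (1:ℝ)) t else G₁ t with hGdef
  have hG : ContDiff ℝ (n : ℕ∞) G := by
    refine glue n (fun _ => (1:ℝ)) G₁ (contDiff_const.of_le hle) hG₁ ?_
    intro j hj
    rw [Filter.EventuallyEq.iteratedDeriv_eq j hG₁ev]
    exact match0 n hn j hj
  have hd : (0:ℝ) < c₂ ^ 2 - c₁ ^ 2 := by nlinarith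
  set t : ℝ → ℝ := fun η => (η ^ 2 - c₁ ^ 2) / (c₂ ^ 2 - c₁ ^ 2) with htdef
  have ht : ContDiff ℝ (n : ℕ∞) t :=
    ((contDiff_id.pow 2).sub contDiff_const).div_const _
  have hϖeq : ϖ = fun η => G (t η) := by
    funext η
    rcases le_or_gt |η| c₁ with h1 | h1
    · have hη2 : η ^ 2 ≤ c₁ ^ 2 := by nlinarith [sq_abs η, abs_nonneg η]
      have htle : t η ≤ 0 := div_nonpos_of_nonpos_of_nonneg (by linarith) (le_of_lt hd)
      rw [h_inner η h1]
      simp [hGdef, htle]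
    · rcases lt_or_ge |η| c₂ with h2 | h2
      · have hη2 : c₁ ^ 2 < η ^ 2 := by nlinarith [sq_abs η, abs_nonneg η]
        have hη2' : η ^ 2 < c₂ ^ 2 := by nlinarith [sq_abs η, abs_nonneg η]
        have htpos : 0 < t η := div_pos (by linarith) hd
        have htle1 : t η ≤ 1 := by
          rw [htdef, div_le_one hd]; linarith
        rw [h_mid η h1 h2]
        simp only [hGdef, hG₁def, if_neg (not_le.mpr htpos), if_pos htle1]
        rfl
      · have hη2 : c₂ ^ 2 ≤ η ^ 2 := by nlinarith [sq_abs η, abs_nonneg η]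
        have htge1 : 1 ≤ t η := by rw [htdef, le_div_iff₀ hd]; linarith
        rw [h_outer η h2]
        simp only [hGdef, hG₁def, if_neg (not_le.mpr (by linarith : (0:ℝ) < t η))]
        rcases eq_or_lt_of_le htge1 with hq | hq
        · rw [if_pos hq.symm.le, ← hq, hF1]
        · rw [if_neg (not_le.mpr hq)]
  constructor
  · rw [hϖeq]
    exact hG.comp ht
  · intro η
    rcases le_or_gt |η| c₁ with h1 | h1
    · rw [h_inner η h1]; exact Set.mem_Icc.mpr ⟨by norm_num, le_rfl⟩
    · rcases lt_or_ge |η| c₂ with h2 | h2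
      · have hη2 : c₁ ^ 2 < η ^ 2 := by nlinarith [sq_abs η, abs_nonneg η]
        have hη2' : η ^ 2 < c₂ ^ 2 := by nlinarith [sq_abs η, abs_nonneg η]
        have hs0 : 0 ≤ t η := le_of_lt (div_pos (by linarith) hd)
        have hs1 : t η ≤ 1 := by rw [htdef, div_le_one hd]; linarith
        have hπ : (0:ℝ) < π := Real.pi_pos
        have hu0 : 0 ≤ Real.sin ((π / 2) * t η) :=
          Real.sin_nonneg_of_nonneg_of_le_pi (by nlinarith) (by nlinarith)
        have hu1 : Real.sin ((π / 2) * t η) ≤ 1 := Real.sin_le_one _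
        have hx0 : 0 ≤ (π / 2) * (Real.sin ((π / 2) * t η)) ^ n := by positivity
        have hx1 : (π / 2) * (Real.sin ((π / 2) * t η)) ^ n ≤ π / 2 := by
          have : (Real.sin ((π / 2) * t η)) ^ n ≤ 1 := pow_le_one₀ hu0 hu1
          nlinarith
        have hc0 : 0 ≤ Real.cos ((π / 2) * (Real.sin ((π / 2) * t η)) ^ n) :=
          Real.cos_nonneg_of_mem_Icc ⟨by linarith, hx1⟩
        have hc1 : Real.cos ((π / 2) * (Real.sin ((π / 2) * t η)) ^ n) ≤ 1 :=
          Real.cos_le_one _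
        rw [h_mid η h1 h2]
        exact Set.mem_Icc.mpr ⟨pow_nonneg hc0 n, pow_le_one₀ hc0 hc1⟩
      · rw [h_outer η h2]; exact Set.mem_Icc.mpr ⟨le_rfl, by norm_num⟩
end

section
/- Let $\vartheta_1, \vartheta_2, \vartheta_3 > 0$, $0 < m_c < 1$, $\nu \in (0,1)$, and let $V : [0,\infty) \to [0,\infty)$ be differentiable with $\dot V(t) \le -\vartheta_1 V(t) - \vartheta_2 V(t)^{\frac{1+m_c}{2}} + \vartheta_3$ for all $t \ge 0$. Suppose $\sigma, \delta : [0,\infty) \to \mathbb{R}$ satisfy $\tfrac{1}{2}\sigma(t)^2 \le V(t)$ and $\tfrac{1}{2}\delta(t)^2 \le V(t)$ for all $t$. Then there exists $T_s \le \max\{ \tfrac{2}{\nu\vartheta_1(1-m_c)} \ln \tfrac{\nu\vartheta_1 V(0)^{\frac{1-m_c}{2}} + \vartheta_2}{\vartheta_2},\ \tfrac{2}{\vartheta_1(1-m_c)} \ln \tfrac{\vartheta_1 V(0)^{\frac{1-m_c}{2}} + \nu\vartheta_2}{\nu\vartheta_2} \}$ such that for all $t \ge T_s$: $|\sigma(t)|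 \le B$, $|\delta(t)| \le B$, and $|\sigma(t)| + |\delta(t)| \le 2B$, where $B := \min\Big\{ \sqrt{\tfrac{2\vartheta_3}{(1-\nu)\vartheta_1}},\ \sqrt{2\big(\tfrac{\vartheta_3}{(1-\nu)\vartheta_2}\big)^{\frac{2}{1+m_c}}} \Big\}$. -/
open Real Set

private lemma aux_inv (L : ℝ) (V : ℝ → ℝ)
    (hVdiff : ∀ t, 0 ≤ t → DifferentiableAt ℝ V t)
    (hder : ∀ u, 0 ≤ u → L ≤ V u → deriv V u < 0)
    (t₀ t : ℝ) (h0 : 0 ≤ t₀) (ht : t₀ ≤ t) (hV0 : V t₀ ≤ L) : V t ≤ L := by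
  by_contra hgt
  push_neg at hgt
  have htt : t₀ < t := by
    rcases lt_or_eq_of_le ht with h | h
    · exact h
    · exfalso; rw [h] at hV0; linarith
  have hcont : ContinuousOn V (Icc t₀ t) := fun u hu =>
    ((hVdiff u (le_trans h0 hu.1)).continuousAt).continuousWithinAt
  set S : Set ℝ := Icc t₀ t ∩ V ⁻¹' Iic L with hSdef
  have hSclosed : IsClosed S :=
    hcont.preimage_isClosed_of_isClosed isClosed_Icc isClosed_Iic
  have hScpt : IsCompact S :=
    IsCompact.of_isClosed_subset isCompact_Icc hSclosed inter_subset_left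
  have hSne : S.Nonempty := ⟨t₀, ⟨le_refl _, le_of_lt htt⟩, by simpa using hV0⟩
  set s := sSup S with hs
  have hsS : s ∈ S := hScpt.sSup_mem hSne
  have hsIcc : s ∈ Icc t₀ t := hsS.1
  have hVs : V s ≤ L := hsS.2
  have hst : s < t := by
    rcases lt_or_eq_of_le hsIcc.2 with h | h
    · exact h
    · exfalso; rw [h] at hVs; linarith
  have hSbdd : BddAbove S := hScpt.bddAbove
  have hVgt : ∀ u ∈ Ioc s t, L < V u := by
    intro u hu
    by_contra hle
    push_neg at hle
    have huS : u ∈ S := ⟨⟨le_trans hsIcc.1 hu.1.le, hu.2⟩, hle⟩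
    have := le_csSup hSbdd huS
    linarith [hu.1]
  have hs0 : 0 ≤ s := le_trans h0 hsIcc.1
  obtain ⟨c, hc, hceq⟩ := exists_hasDerivAt_eq_slope V (deriv V) hst
    (hcont.mono (Icc_subset_Icc hsIcc.1 le_rfl))
    (fun x hx => (hVdiff x (le_trans hs0 hx.1.le)).hasDerivAt)
  have hc0 : 0 ≤ c := le_trans hs0 hc.1.le
  have hVc : L ≤ V c := (hVgt c ⟨hc.1, hc.2.le⟩).le
  have hneg : deriv V c < 0 := hder c hc0 hVc
  rw [hceq] at hneg
  have hts : 0 < t - s := sub_pos.mpr hst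
  have : V t - V s < 0 := by
    by_contra hh
    push_neg at hh
    have := div_nonneg hh hts.le
    linarith
  linarith

private lemma aux_reach (p q m L : ℝ) (hp : 0 < p) (hq : 0 < q)
    (hm0 : 0 < m) (hm1 : m < 1) (hL : 0 < L) (V : ℝ → ℝ)
    (hV0nonneg : 0 ≤ V 0)
    (hVdiff : ∀ t, 0 ≤ t → DifferentiableAt ℝ V t)
    (hder : ∀ t, 0 ≤ t → L ≤ V t → deriv V t ≤ -p * V t - q * V t ^ m) :
    ∃ t₀, 0 ≤ t₀ ∧
      t₀ ≤ (1 / ((1 - m) * p)) * Real.log ((p * V 0 ^ (1 - m) + q) / q) ∧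
      V t₀ ≤ L := by
  by_cases h0 : V 0 ≤ L
  · refine ⟨0, le_refl 0, ?_, h0⟩
    have h1 : (1 : ℝ) ≤ (p * V 0 ^ (1 - m) + q) / q := by
      rw [le_div_iff₀ hq]
      have : 0 ≤ p * V 0 ^ (1 - m) := by positivity
      linarith
    have hlog : 0 ≤ Real.log ((p * V 0 ^ (1 - m) + q) / q) := Real.log_nonneg h1
    have h1m : 0 < 1 - m := by linarith
    positivity
  · push_neg at h0
    set T : ℝ := (1 / ((1 - m) * p)) * Real.log ((p * V 0 ^ (1 - m) + q) / q) with hT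
    have hV0pos : 0 < V 0 := lt_trans hL h0
    have hy0 : 0 < V 0 ^ (1 - m) := Real.rpow_pos_of_pos hV0pos _
    have harg : 1 < (p * V 0 ^ (1 - m) + q) / q := by
      rw [lt_div_iff₀ hq]
      have : 0 < p * V 0 ^ (1 - m) := by positivity
      linarith
    have h1m : 0 < 1 - m := by linarith
    have hTpos : 0 < T := by
      have hlp := Real.log_pos harg
      rw [hT]
      positivity
    by_contra hcon
    push_neg at hcon
    have hVgt : ∀ u ∈ Icc (0 : ℝ) T, L < V u := fun u hu => hcon u hu.1 hu.2
    set W : ℝ → ℝ := fun t => Real.log (p * V t ^ (1 - m) + q) with hWdef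
    set W' : ℝ → ℝ := fun t =>
      (p * (deriv V t * (1 - m) * V t ^ (1 - m - 1))) / (p * V t ^ (1 - m) + q)
      with hW'def
    have hWderiv : ∀ c ∈ Icc (0 : ℝ) T, HasDerivAt W (W' c) c := by
      intro c hc
      have hVcpos : 0 < V c := lt_trans hL (hVgt c hc)
      have hVne : V c ≠ 0 := ne_of_gt hVcpos
      have hV : HasDerivAt V (deriv V c) c := (hVdiff c hc.1).hasDerivAt
      have h1 : HasDerivAt (fun t => V t ^ (1 - m))
          (deriv V c * (1 - m) * V c ^ (1 - m - 1)) c :=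
        hV.rpow_const (Or.inl hVne)
      have h2 := (h1.const_mul p).add_const q
      have hz : p * V c ^ (1 - m) + q ≠ 0 := by
        have : 0 < V c ^ (1 - m) := Real.rpow_pos_of_pos hVcpos _
        positivity
      exact h2.log hz
    have hWbound : ∀ c ∈ Ioo (0 : ℝ) T, W' c ≤ -((1 - m) * p) := by
      intro c hc
      have hcIcc : c ∈ Icc (0 : ℝ) T := ⟨hc.1.le, hc.2.le⟩
      have hVcpos : 0 < V c := lt_trans hL (hVgt c hcIcc)
      have hVne : V c ≠ 0 := ne_of_gt hVcpos
      have hypos : 0 < V c ^ (1 - m) := Real.rpow_pos_of_pos hVcpos _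
      have hzpos : 0 < p * V c ^ (1 - m) + q := by positivity
      have hd : deriv V c ≤ -p * V c - q * V c ^ m :=
        hder c hc.1.le (le_of_lt (hVgt c hcIcc))
      have hA : 0 < V c ^ (1 - m - 1) := Real.rpow_pos_of_pos hVcpos _
      have e1 : V c ^ (1 - m - 1) * V c = V c ^ (1 - m) := by
        have h := Real.rpow_add_one hVne (1 - m - 1)
        rw [show (1 - m - 1) + 1 = 1 - m by ring] at h
        linarith
      have e2 : V c ^ (1 - m - 1) * V c ^ m = 1 := by
        rw [← Real.rpow_add hVcpos, show (1 - m - 1) + m = 0 by ring, Real.rpow_zero]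
      have e1' : p * (V c ^ (1 - m - 1) * V c) = p * V c ^ (1 - m) := by rw [e1]
      have e2' : q * (V c ^ (1 - m - 1) * V c ^ m) = q := by rw [e2]; ring
      have hmul : V c ^ (1 - m - 1) * deriv V c
          ≤ V c ^ (1 - m - 1) * (-p * V c - q * V c ^ m) :=
        mul_le_mul_of_nonneg_left hd hA.le
      have h2 : V c ^ (1 - m - 1) * deriv V c ≤ -(p * V c ^ (1 - m)) - q := by
        nlinarith [hmul, e1', e2']
      have h3 := mul_le_mul_of_nonneg_left h2 (show (0:ℝ) ≤ p * (1 - m) by positivity)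
      have hnum : p * (deriv V c * (1 - m) * V c ^ (1 - m - 1))
          ≤ -((1 - m) * p) * (p * V c ^ (1 - m) + q) := by nlinarith [h3]
      rw [hW'def]
      rw [div_le_iff₀ hzpos]
      exact hnum
    have hWcont : ContinuousOn W (Icc 0 T) := fun u hu =>
      (hWderiv u hu).continuousAt.continuousWithinAt
    obtain ⟨c, hc, hceq⟩ := exists_hasDerivAt_eq_slope W W' hTpos hWcont
      (fun x hx => hWderiv x ⟨hx.1.le, hx.2.le⟩)
    have hslope : (W T - W 0) / (T - 0) ≤ -((1 - m) * p) := by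
      rw [← hceq]; exact hWbound c hc
    have hWT : W T - W 0 ≤ -((1 - m) * p) * T := by
      rw [div_le_iff₀ (by linarith : (0:ℝ) < T - 0)] at hslope
      linarith
    have hTval : ((1 - m) * p) * T = Real.log ((p * V 0 ^ (1 - m) + q) / q) := by
      rw [hT]
      field_simp
    have hW0 : W 0 = Real.log (p * V 0 ^ (1 - m) + q) := rfl
    have hlogdiv : Real.log ((p * V 0 ^ (1 - m) + q) / q)
        = Real.log (p * V 0 ^ (1 - m) + q) - Real.log q := by
      apply Real.log_div
      · positivity
      · exact ne_of_gt hq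
    have hWTle : W T ≤ Real.log q := by
      have h1 := hWT
      have h2 : -((1 - m) * p) * T = -(((1 - m) * p) * T) := by ring
      rw [h2, hTval, hlogdiv, hW0] at h1
      linarith
    have hVTpos : 0 < V T := lt_trans hL (hVgt T ⟨hTpos.le, le_refl T⟩)
    have hyT : 0 < V T ^ (1 - m) := Real.rpow_pos_of_pos hVTpos _
    have hzT : 0 < p * V T ^ (1 - m) + q := by positivity
    have hfin : p * V T ^ (1 - m) + q ≤ q := (Real.log_le_log_iff hzT hq).mp hWTle
    nlinarith [hyT]


set_option maxHeartbeats 1000000 in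
/-- Concluding step of Theorem 1 (displays (21)–(25)): if the closed-loop
Lyapunov function `V` satisfies the fast finite-time differential inequality
`V' ≤ -ϑ₁ V - ϑ₂ V^{(1+m_c)/2} + ϑ₃` and dominates `σ²/2` and `δ²/2`, then
after a settling time `Tₛ` bounded by the explicit expression, `|σ|`, `|δ|`
and `|σ| + |δ|` stay within the explicit residual bounds. -/
theorem closed_loop_fast_finite_time_residual_bounds
    (ϑ₁ ϑ₂ ϑ₃ mc ν : ℝ)
    (hϑ₁ : 0 < ϑ₁) (hϑ₂ : 0 < ϑ₂) (hϑ₃ : 0 < ϑ₃)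
    (hmc0 : 0 < mc) (hmc1 : mc < 1) (hν : ν ∈ Set.Ioo (0 : ℝ) 1)
    (V : ℝ → ℝ)
    (hVnonneg : ∀ t, 0 ≤ t → 0 ≤ V t)
    (hVdiff : ∀ t, 0 ≤ t → DifferentiableAt ℝ V t)
    (hVineq : ∀ t, 0 ≤ t →
      deriv V t ≤ -ϑ₁ * V t - ϑ₂ * (V t) ^ ((1 + mc) / 2) + ϑ₃)
    (σ δ : ℝ → ℝ)
    (hσ : ∀ t, 0 ≤ t → σ t ^ 2 / 2 ≤ V t)
    (hδ : ∀ t, 0 ≤ t → δ t ^ 2 / 2 ≤ V t) :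
    ∃ Ts : ℝ,
      Ts ≤ max
        ((2 / (ν * ϑ₁ * (1 - mc))) *
          Real.log ((ν * ϑ₁ * (V 0) ^ ((1 - mc) / 2) + ϑ₂) / ϑ₂))
        ((2 / (ϑ₁ * (1 - mc))) *
          Real.log ((ϑ₁ * (V 0) ^ ((1 - mc) / 2) + ν * ϑ₂) / (ν * ϑ₂))) ∧
      ∀ t ≥ Ts,
        |σ t| ≤ min (Real.sqrt (2 * ϑ₃ / ((1 - ν) * ϑ₁)))
            (Real.sqrt (2 * (ϑ₃ / ((1 - ν) * ϑ₂)) ^ (2 / (1 + mc)))) ∧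
        |δ t| ≤ min (Real.sqrt (2 * ϑ₃ / ((1 - ν) * ϑ₁)))
            (Real.sqrt (2 * (ϑ₃ / ((1 - ν) * ϑ₂)) ^ (2 / (1 + mc)))) ∧
        |σ t| + |δ t| ≤ 2 * min (Real.sqrt (2 * ϑ₃ / ((1 - ν) * ϑ₁)))
            (Real.sqrt (2 * (ϑ₃ / ((1 - ν) * ϑ₂)) ^ (2 / (1 + mc)))) := by
  obtain ⟨hν0, hν1⟩ := hν
  have h1ν : 0 < 1 - ν := by linarith
  have h1mc : 0 < 1 - mc := by linarith
  have h1mc' : 0 < 1 + mc := by linarith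
  set m : ℝ := (1 + mc) / 2 with hm
  have hm0 : 0 < m := by rw [hm]; linarith
  have hm1 : m < 1 := by rw [hm]; linarith
  have hexp : (1 : ℝ) - m = (1 - mc) / 2 := by rw [hm]; ring
  set L₁ : ℝ := ϑ₃ / ((1 - ν) * ϑ₁) with hL₁
  set L₂ : ℝ := (ϑ₃ / ((1 - ν) * ϑ₂)) ^ (2 / (1 + mc)) with hL₂
  have hL₁pos : 0 < L₁ := by rw [hL₁]; positivity
  have hbase : (0:ℝ) < ϑ₃ / ((1 - ν) * ϑ₂) := by positivity
  have hL₂pos : 0 < L₂ := by rw [hL₂]; exact Real.rpow_pos_of_pos hbase _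
  have hL₂m : L₂ ^ m = ϑ₃ / ((1 - ν) * ϑ₂) := by
    rw [hL₂, ← Real.rpow_mul hbase.le,
      show 2 / (1 + mc) * m = 1 by rw [hm]; field_simp, Real.rpow_one]
  -- the common final step, given a settling time after which V ≤ min L₁ L₂
  have final : ∀ Ts : ℝ, 0 ≤ Ts → (∀ t, Ts ≤ t → V t ≤ L₁ ∧ V t ≤ L₂) →
      ∀ t ≥ Ts,
        |σ t| ≤ min (Real.sqrt (2 * ϑ₃ / ((1 - ν) * ϑ₁)))
            (Real.sqrt (2 * L₂)) ∧
        |δ t| ≤ min (Real.sqrt (2 * ϑ₃ / ((1 - ν) * ϑ₁)))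
            (Real.sqrt (2 * L₂)) ∧
        |σ t| + |δ t| ≤ 2 * min (Real.sqrt (2 * ϑ₃ / ((1 - ν) * ϑ₁)))
            (Real.sqrt (2 * L₂)) := by
    intro Ts hTs0 hVle t ht
    have ht0 : 0 ≤ t := le_trans hTs0 ht
    obtain ⟨hVt1, hVt2⟩ := hVle t ht
    have e1 : 2 * ϑ₃ / ((1 - ν) * ϑ₁) = 2 * L₁ := by rw [hL₁]; ring
    have habs : ∀ f : ℝ → ℝ, (∀ u, 0 ≤ u → f u ^ 2 / 2 ≤ V u) →
        |f t| ≤ min (Real.sqrt (2 * ϑ₃ / ((1 - ν) * ϑ₁))) (Real.sqrt (2 * L₂)) := by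
      intro f hf
      refine le_min ?_ ?_
      · rw [e1, ← Real.sqrt_sq_eq_abs]
        exact Real.sqrt_le_sqrt (by have := hf t ht0; linarith)
      · rw [← Real.sqrt_sq_eq_abs]
        exact Real.sqrt_le_sqrt (by have := hf t ht0; linarith)
    have hσt := habs σ hσ
    have hδt := habs δ hδ
    exact ⟨hσt, hδt, by linarith⟩
  rcases le_total L₁ L₂ with hcase | hcase
  · -- L₁ ≤ L₂ : use p = ν ϑ₁, q = ϑ₂
    have hder1 : ∀ t, 0 ≤ t → L₁ ≤ V t →
        deriv V t ≤ -(ν * ϑ₁) * V t - ϑ₂ * V t ^ m := by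
      intro t ht hLt
      have h3 : ϑ₃ ≤ (1 - ν) * ϑ₁ * V t := by
        rw [hL₁, div_le_iff₀ (by positivity)] at hLt
        nlinarith [hLt]
      have h4 := hVineq t ht
      nlinarith [h3, h4]
    obtain ⟨t₀, ht₀0, ht₀le, hVt₀⟩ := aux_reach (ν * ϑ₁) ϑ₂ m L₁
      (by positivity) hϑ₂ hm0 hm1 hL₁pos V (hVnonneg 0 le_rfl) hVdiff hder1
    have hTeq : (1 / ((1 - m) * (ν * ϑ₁))) *
        Real.log ((ν * ϑ₁ * V 0 ^ (1 - m) + ϑ₂) / ϑ₂)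
        = (2 / (ν * ϑ₁ * (1 - mc))) *
          Real.log ((ν * ϑ₁ * (V 0) ^ ((1 - mc) / 2) + ϑ₂) / ϑ₂) := by
      rw [hexp]
      congr 1
      rw [div_eq_div_iff (by positivity) (by positivity)]
      ring
    rw [hTeq] at ht₀le
    have hneg : ∀ u, 0 ≤ u → L₁ ≤ V u → deriv V u < 0 := by
      intro u hu hLu
      have h1 := hder1 u hu hLu
      have hVu : 0 < V u := lt_of_lt_of_le hL₁pos hLu
      have h2 : 0 < V u ^ m := Real.rpow_pos_of_pos hVu m
      have h3 : 0 < ν * ϑ₁ * V u := by positivity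
      have h4 : 0 < ϑ₂ * V u ^ m := by positivity
      linarith [h1, h3, h4]
    have hVle : ∀ t, t₀ ≤ t → V t ≤ L₁ ∧ V t ≤ L₂ := by
      intro t htt
      have h1 : V t ≤ L₁ := aux_inv L₁ V hVdiff hneg t₀ t ht₀0 htt hVt₀
      exact ⟨h1, le_trans h1 hcase⟩
    exact ⟨t₀, le_trans ht₀le (le_max_left _ _), final t₀ ht₀0 hVle⟩
  · -- L₂ ≤ L₁ : use p = ϑ₁, q = ν ϑ₂
    have hder2 : ∀ t, 0 ≤ t → L₂ ≤ V t →
        deriv V t ≤ -ϑ₁ * V t - (ν * ϑ₂) * V t ^ m := by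
      intro t ht hLt
      have hrp : L₂ ^ m ≤ V t ^ m :=
        Real.rpow_le_rpow hL₂pos.le hLt hm0.le
      rw [hL₂m, div_le_iff₀ (by positivity)] at hrp
      have h4 := hVineq t ht
      nlinarith [hrp, h4]
    obtain ⟨t₀, ht₀0, ht₀le, hVt₀⟩ := aux_reach ϑ₁ (ν * ϑ₂) m L₂
      hϑ₁ (by positivity) hm0 hm1 hL₂pos V (hVnonneg 0 le_rfl) hVdiff hder2
    have hTeq : (1 / ((1 - m) * ϑ₁)) *
        Real.log ((ϑ₁ * V 0 ^ (1 - m) + ν * ϑ₂) / (ν * ϑ₂))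
        = (2 / (ϑ₁ * (1 - mc))) *
          Real.log ((ϑ₁ * (V 0) ^ ((1 - mc) / 2) + ν * ϑ₂) / (ν * ϑ₂)) := by
      rw [hexp]
      congr 1
      rw [div_eq_div_iff (by positivity) (by positivity)]
      ring
    rw [hTeq] at ht₀le
    have hneg : ∀ u, 0 ≤ u → L₂ ≤ V u → deriv V u < 0 := by
      intro u hu hLu
      have h1 := hder2 u hu hLu
      have hVu : 0 < V u := lt_of_lt_of_le hL₂pos hLu
      have h2 : 0 < V u ^ m := Real.rpow_pos_of_pos hVu m
      have h3 : 0 < ϑ₁ * V u := by positivity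
      have h4 : 0 < ν * ϑ₂ * V u ^ m := by positivity
      linarith [h1, h3, h4]
    have hVle : ∀ t, t₀ ≤ t → V t ≤ L₁ ∧ V t ≤ L₂ := by
      intro t htt
      have h1 : V t ≤ L₂ := aux_inv L₂ V hVdiff hneg t₀ t ht₀0 htt hVt₀
      exact ⟨le_trans h1 hcase, h1⟩
    exact ⟨t₀, le_trans ht₀le (le_max_right _ _), final t₀ ht₀0 hVle⟩
end
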